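/- Let G be a strongly regular graph with parameters (v,k,λ,μ) whose smallest eigenvalue lies in the interval [−3,−2), and suppose G is integrable, i.e. there exists a matrix N with integer entries such that NᵀN = A(G) + 3·I. If μ ≥ 10, then 3 divides v and G is isomorphic to the complete multipartite graph K_{(v/3)×3} with v/3 parts each of size 3. -/

import Mathlib

open Matrix Finset
open scoped Classical
set_option linter.unusedSectionVars false
set_option maxHeartbeats 1600000

namespace SRGm3

variable {ρ : ℕ} {V : Type} [Fintype V] [DecidableEq V] {G : SimpleGraph V} {v k l m : ℕ}
variable {φ : V → Fin ρ → ℤ}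



variable {ρ : ℕ}

/-- entries of a norm-3 integer vector are in [-1,1] -/
lemma entry_bound (u : Fin ρ → ℤ) (h3 : ∑ i, u i * u i = 3) (i : Fin ρ) :
    -1 ≤ u i ∧ u i ≤ 1 := by
  have h1 : u i * u i ≤ 3 := by
    rw [← h3]
    exact Finset.single_le_sum (fun j _ => mul_self_nonneg (u j)) (Finset.mem_univ i)
  constructor <;> nlinarith

lemma sum_split (s : Finset (Fin ρ)) (f : Fin ρ → ℤ) :
    ∑ i, f i = (∑ i ∈ s, f i) + ∑ i ∈ Finset.univ \ s, f i := by
  rw [add_comm, Finset.sum_sdiff (Finset.subset_univ s)]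

/-- Cauchy-Schwarz corollary: if both restricted norms are ≤ 1, the restricted dot is in [-1,1]. -/
lemma dot_small (s : Finset (Fin ρ)) (u w : Fin ρ → ℤ)
    (hu : ∑ i ∈ s, u i * u i ≤ 1) (hw : ∑ i ∈ s, w i * w i ≤ 1) :
    -1 ≤ ∑ i ∈ s, u i * w i ∧ ∑ i ∈ s, u i * w i ≤ 1 := by
  have hcs := Finset.sum_mul_sq_le_sq_mul_sq s u w
  have hu' : ∑ i ∈ s, u i ^ 2 ≤ 1 := by simpa [sq] using hu
  have hw' : ∑ i ∈ s, w i ^ 2 ≤ 1 := by simpa [sq] using hw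
  have h0u : (0:ℤ) ≤ ∑ i ∈ s, u i ^ 2 := Finset.sum_nonneg fun i _ => sq_nonneg _
  have h0w : (0:ℤ) ≤ ∑ i ∈ s, w i ^ 2 := Finset.sum_nonneg fun i _ => sq_nonneg _
  have : (∑ i ∈ s, u i * w i) ^ 2 ≤ 1 := by
    calc (∑ i ∈ s, u i * w i) ^ 2 ≤ (∑ i ∈ s, u i ^ 2) * ∑ i ∈ s, w i ^ 2 := hcs
    _ ≤ 1 := by nlinarith
  constructor <;> nlinarith

/-- equality case: restricted norms ≤1 each and dot = -1 forces pointwise opposite on s. -/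
lemma dot_neg_one_eq (s : Finset (Fin ρ)) (u w : Fin ρ → ℤ)
    (hu : ∑ i ∈ s, u i * u i ≤ 1) (hw : ∑ i ∈ s, w i * w i ≤ 1)
    (hd : ∑ i ∈ s, u i * w i = -1) : ∀ i ∈ s, u i + w i = 0 := by
  have key : ∑ i ∈ s, (u i + w i) * (u i + w i) = 0 := by
    have expand : ∑ i ∈ s, (u i + w i) * (u i + w i)
        = (∑ i ∈ s, u i * u i) + 2 * (∑ i ∈ s, u i * w i) + ∑ i ∈ s, w i * w i := by
      rw [Finset.mul_sum, ← Finset.sum_add_distrib, ← Finset.sum_add_distrib]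
      exact Finset.sum_congr rfl fun i _ => by ring
    have h1 : ∑ i ∈ s, (u i + w i) * (u i + w i) ≤ 0 := by rw [expand, hd]; linarith
    have h2 : (0:ℤ) ≤ ∑ i ∈ s, (u i + w i) * (u i + w i) :=
      Finset.sum_nonneg fun i _ => mul_self_nonneg _
    omega
  intro i hi
  have := (Finset.sum_eq_zero_iff_of_nonneg (fun j _ => mul_self_nonneg (u j + w j))).1 key i hi
  nlinarith [this]





variable {ρ : ℕ} {V : Type} [Fintype V] [DecidableEq V] {G : SimpleGraph V} {v k l m : ℕ}

/-- A norm-3 integral representation of a graph. -/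
structure Rep (G : SimpleGraph V) (φ : V → Fin ρ → ℤ) : Prop where
  norm3 : ∀ x, ∑ i, φ x i * φ x i = 3
  adj1 : ∀ x y, G.Adj x y → ∑ i, φ x i * φ y i = 1
  nadj0 : ∀ x y, x ≠ y → ¬ G.Adj x y → ∑ i, φ x i * φ y i = 0

variable {φ : V → Fin ρ → ℤ}

lemma Rep.dot01 (hrep : Rep G φ) {x y : V} (h : x ≠ y) :
    ∑ i, φ x i * φ y i = 0 ∨ ∑ i, φ x i * φ y i = 1 := by
  by_cases hadj : G.Adj x y
  · exact Or.inr (hrep.adj1 x y hadj)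
  · exact Or.inl (hrep.nadj0 x y h hadj)

lemma Rep.adj_of_dot_one (hrep : Rep G φ) {x y : V} (h : x ≠ y)
    (hd : ∑ i, φ x i * φ y i = 1) : G.Adj x y := by
  by_contra hadj
  have := hrep.nadj0 x y h hadj
  omega

lemma Rep.nadj_of_dot_zero (hrep : Rep G φ) {x y : V}
    (hd : ∑ i, φ x i * φ y i = 0) : ¬ G.Adj x y := by
  intro hadj
  have := hrep.adj1 x y hadj
  omega

lemma dot_parity (u w w' : Fin ρ → ℤ) (heven : ∀ i, 2 ∣ (w i - w' i)) :
    2 ∣ ((∑ i, u i * w i) - ∑ i, u i * w' i) := by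
  rw [← Finset.sum_sub_distrib]
  apply Finset.dvd_sum
  intro i _
  have : u i * w i - u i * w' i = u i * (w i - w' i) := by ring
  rw [this]
  exact Dvd.dvd.mul_left (heven i) _

/-- THE TWINS LEMMA: two distinct vertices whose vectors are congruent mod 2
    are impossible (given some non-adjacent pair and `10 ≤ m`). -/
lemma no_twins (hsrg : G.IsSRGWith v k l m) (hrep : Rep G φ) (hm : 10 ≤ m)
    {x z : V} (hxz : x ≠ z) (heven : ∀ i, 2 ∣ (φ x i - φ z i))
    {a b : V} (hab : a ≠ b) (hnab : ¬ G.Adj a b) : False := by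
  -- x and z are adjacent
  have hdxz : ∑ i, φ x i * φ z i = 1 := by
    have hpar := dot_parity (φ x) (φ x) (φ z) heven
    rw [hrep.norm3 x] at hpar
    rcases hrep.dot01 hxz with h0 | h1
    · rw [h0] at hpar; omega
    · exact h1
  have haxz : G.Adj x z := hrep.adj_of_dot_one hxz hdxz
  -- neighbours transfer
  have htrans : ∀ w : V, w ≠ x → w ≠ z → (G.Adj w x ↔ G.Adj w z) := by
    intro w hwx hwz
    have hpar := dot_parity (φ w) (φ x) (φ z) heven
    constructor
    · intro h
      rw [hrep.adj1 w x h] at hpar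
      rcases hrep.dot01 hwz with h0 | h1
      · rw [h0] at hpar; omega
      · exact hrep.adj_of_dot_one hwz h1
    · intro h
      rw [hrep.adj1 w z h] at hpar
      rcases hrep.dot01 hwx with h0 | h1
      · rw [h0] at hpar; omega
      · exact hrep.adj_of_dot_one hwx h1
  -- common neighbours of x z = neighbours of x minus z
  have hset : (G.commonNeighbors x z).toFinset = (G.neighborFinset x).erase z := by
    ext w
    simp only [Set.mem_toFinset, SimpleGraph.mem_commonNeighbors, Finset.mem_erase,
      SimpleGraph.mem_neighborFinset]
    constructor
    · rintro ⟨h1, h2⟩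
      exact ⟨(G.ne_of_adj h2).symm, h1⟩
    · rintro ⟨h1, h2⟩
      have hwx : w ≠ x := fun hw => G.irrefl (hw ▸ h2.symm)
      exact ⟨h2, ((htrans w hwx h1).1 h2.symm).symm⟩
  have hl : l = k - 1 := by
    have h1 : Fintype.card (G.commonNeighbors x z) = l := hsrg.of_adj x z haxz
    rw [← Set.toFinset_card, hset, Finset.card_erase_of_mem
      (by rw [SimpleGraph.mem_neighborFinset]; exact haxz)] at h1
    rw [← h1, G.card_neighborFinset_eq_degree, hsrg.regular x]
  have hk1 : 1 ≤ k := by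
    have h2 : G.degree x = k := hsrg.regular x
    have hz : z ∈ G.neighborFinset x := by rw [SimpleGraph.mem_neighborFinset]; exact haxz
    have hpos : 0 < (G.neighborFinset x).card := Finset.card_pos.2 ⟨z, hz⟩
    rw [G.card_neighborFinset_eq_degree, h2] at hpos
    omega
  -- get a common neighbour w of the non-adjacent pair a b
  have hcard : Fintype.card (G.commonNeighbors a b) = m := hsrg.of_not_adj hab hnab
  have : 0 < Fintype.card (G.commonNeighbors a b) := by omega
  rw [Fintype.card_pos_iff] at this
  obtain ⟨⟨w, hw⟩⟩ := this
  rw [SimpleGraph.mem_commonNeighbors] at hw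
  -- commons of edge (w, a) = all neighbours of w except a
  have hwa : G.Adj w a := hw.1.symm
  have hsub : (G.commonNeighbors w a).toFinset ⊆ (G.neighborFinset w).erase a := by
    intro u hu
    simp only [Set.mem_toFinset, SimpleGraph.mem_commonNeighbors] at hu
    simp only [Finset.mem_erase, SimpleGraph.mem_neighborFinset]
    exact ⟨(G.ne_of_adj hu.2).symm, hu.1⟩
  have hcards : ((G.neighborFinset w).erase a).card ≤ (G.commonNeighbors w a).toFinset.card := by
    rw [Set.toFinset_card, hsrg.of_adj w a hwa,
      Finset.card_erase_of_mem (by rw [SimpleGraph.mem_neighborFinset]; exact hwa),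
      G.card_neighborFinset_eq_degree, hsrg.regular w]
    omega
  have heq := Finset.eq_of_subset_of_card_le hsub hcards
  have hb : b ∈ (G.neighborFinset w).erase a := by
    rw [Finset.mem_erase, SimpleGraph.mem_neighborFinset]
    exact ⟨hab.symm, hw.2.symm⟩
  rw [← heq] at hb
  simp only [Set.mem_toFinset, SimpleGraph.mem_commonNeighbors] at hb
  exact hnab hb.2





variable {ρ : ℕ} {V : Type} [Fintype V] [DecidableEq V] {G : SimpleGraph V} {v k l m : ℕ}
variable {φ : V → Fin ρ → ℤ}

section IntHelpers

lemma mul_bound {a b : ℤ} (ha1 : -1 ≤ a) (ha2 : a ≤ 1) (hb1 : -1 ≤ b) (hb2 : b ≤ 1) :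
    -1 ≤ a * b ∧ a * b ≤ 1 := by constructor <;> nlinarith

lemma eq_of_mul_self_one_of_mul_one {a b : ℤ} (ha : a * a = 1) (hab : a * b = 1) : b = a := by
  have h1 : a = 1 ∨ a = -1 := by
    rcases Int.isUnit_iff.1 (IsUnit.of_mul_eq_one (a := a) a ha) with h | h
    · exact Or.inl h
    · exact Or.inr h
  rcases h1 with h | h <;> subst h <;> linarith

lemma eq_zero_of_mul_self_one_of_mul_zero {a b : ℤ} (ha : a * a = 1) (hab : a * b = 0) :
    b = 0 := by
  rcases Int.isUnit_iff.1 (IsUnit.of_mul_eq_one (a := a) a ha) with h | h <;> subst h <;> linarith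

lemma neg_of_mul_self_one_of_mul_neg_one {a b : ℤ} (ha : a * a = 1) (hab : a * b = -1) :
    b = -a := by
  rcases Int.isUnit_iff.1 (IsUnit.of_mul_eq_one (a := a) a ha) with h | h <;> subst h <;> linarith

lemma sq_one_of_mul_eq_one {a b : ℤ} (hab : a * b = 1) : a * a = 1 ∧ b * b = 1 ∧ b = a := by
  have ha : IsUnit a := IsUnit.of_mul_eq_one (a := a) b hab
  rcases Int.isUnit_iff.1 ha with h | h <;> subst h
  · have hb : b = 1 := by linarith
    subst hb; norm_num
  · have hb : b = -1 := by linarith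
    subst hb; norm_num

lemma sq_one_of_mul_eq_neg_one {a b : ℤ} (hab : a * b = -1) :
    a * a = 1 ∧ b * b = 1 ∧ b = -a := by
  have ha : IsUnit a := IsUnit.of_mul_eq_one (a := a) (-b) (by rw [mul_neg, hab]; norm_num)
  rcases Int.isUnit_iff.1 ha with h | h <;> subst h
  · have hb : b = -1 := by linarith
    subst hb; norm_num
  · have hb : b = 1 := by linarith
    subst hb; norm_num

end IntHelpers

section SumHelpers

lemma sum_over_pair (f : Fin ρ → ℤ) {i j : Fin ρ} (hij : i ≠ j) :
    ∑ t ∈ ({i, j} : Finset (Fin ρ)), f t = f i + f j := by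
  rw [Finset.sum_insert (by simp [hij]), Finset.sum_singleton]

lemma sum_over_three (f : Fin ρ → ℤ) {i j t : Fin ρ} (h1 : i ≠ j) (h2 : i ≠ t) (h3 : j ≠ t) :
    ∑ s ∈ ({i, j, t} : Finset (Fin ρ)), f s = f i + f j + f t := by
  rw [Finset.sum_insert (by simp [h1, h2]), sum_over_pair f h3]; ring

lemma sum_over_four (f : Fin ρ → ℤ) {i j t u : Fin ρ} (h1 : i ≠ j) (h2 : i ≠ t) (h3 : i ≠ u)
    (h4 : j ≠ t) (h5 : j ≠ u) (h6 : t ≠ u) :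
    ∑ s ∈ ({i, j, t, u} : Finset (Fin ρ)), f s = f i + f j + f t + f u := by
  rw [Finset.sum_insert (by simp [h1, h2, h3]), sum_over_three f h4 h5 h6]; ring

lemma sum_over_five (f : Fin ρ → ℤ) {i j t u w : Fin ρ} (h1 : i ≠ j) (h2 : i ≠ t) (h3 : i ≠ u)
    (h4 : i ≠ w) (h5 : j ≠ t) (h6 : j ≠ u) (h7 : j ≠ w) (h8 : t ≠ u) (h9 : t ≠ w)
    (h10 : u ≠ w) :
    ∑ s ∈ ({i, j, t, u, w} : Finset (Fin ρ)), f s = f i + f j + f t + f u + f w := by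
  rw [Finset.sum_insert (by simp [h1, h2, h3, h4]), sum_over_four f h5 h6 h7 h8 h9 h10]; ring

end SumHelpers





variable {ρ : ℕ} {V : Type} [Fintype V] [DecidableEq V] {G : SimpleGraph V} {v k l m : ℕ}
variable {φ : V → Fin ρ → ℤ}

lemma Rep.entry (hrep : Rep G φ) (x : V) (i : Fin ρ) : -1 ≤ φ x i ∧ φ x i ≤ 1 :=
  entry_bound (φ x) (hrep.norm3 x) i

lemma Rep.sq_off (hrep : Rep G φ) (x : V) (s : Finset (Fin ρ)) :
    ∑ i ∈ Finset.univ \ s, φ x i * φ x i = 3 - ∑ i ∈ s, φ x i * φ x i := by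
  have := sum_split s (fun i => φ x i * φ x i)
  rw [hrep.norm3 x] at this
  omega

lemma Rep.supp_card (hrep : Rep G φ) (x : V) :
    (Finset.univ.filter fun i => φ x i ≠ 0).card = 3 := by
  have h1 : ∑ i, φ x i * φ x i
      = ∑ i ∈ Finset.univ.filter (fun i => φ x i ≠ 0), φ x i * φ x i := by
    rw [Finset.sum_filter_of_ne]
    intro i _ hne
    intro h0
    rw [h0] at hne
    simp at hne
  have h2 : ∑ i ∈ Finset.univ.filter (fun i => φ x i ≠ 0), φ x i * φ x i
      = ((Finset.univ.filter fun i => φ x i ≠ 0).card : ℤ) := by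
    rw [Finset.card_eq_sum_ones, Nat.cast_sum]
    apply Finset.sum_congr rfl
    intro i hi
    rw [Finset.mem_filter] at hi
    have hb := hrep.entry x i
    have : φ x i = -1 ∨ φ x i = 1 := by omega
    rcases this with h | h <;> rw [h] <;> norm_num
  have h3 := hrep.norm3 x
  rw [h1, h2] at h3
  exact_mod_cast h3

/-- If two nonadjacent vertices have (pointwise) disjoint supports, contradiction. -/
lemma t0_kill (hsrg : G.IsSRGWith v k l m) (hrep : Rep G φ) (hm : 10 ≤ m)
    {x y : V} (hxy : x ≠ y) (hnadj : ¬G.Adj x y)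
    (horth : ∀ i, φ x i * φ y i = 0) : False := by
  have hne : Nonempty (Fin ρ) := by
    rcases Nat.eq_zero_or_pos ρ with h | h
    · exfalso
      have h3 := hrep.norm3 x
      subst h
      simp at h3
    · exact ⟨⟨0, h⟩⟩
  obtain ⟨i0⟩ := hne
  set CN := (G.commonNeighbors x y).toFinset with hCN
  have hCNcard : CN.card = m := by
    rw [hCN, Set.toFinset_card]
    exact hsrg.of_not_adj hxy hnadj
  have hex : ∀ w ∈ CN, (∃ i, φ w i * φ x i = 1) ∧ (∃ j, φ w j * φ y j = 1) := by
    intro w hw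
    rw [hCN, Set.mem_toFinset, SimpleGraph.mem_commonNeighbors] at hw
    constructor
    · have hd : ∑ i, φ w i * φ x i = 1 := hrep.adj1 w x hw.1.symm
      by_contra hno
      push_neg at hno
      have hle : ∑ i, φ w i * φ x i ≤ 0 := by
        apply Finset.sum_nonpos
        intro i _
        have hb1 := hrep.entry w i
        have hb2 := hrep.entry x i
        have := mul_bound hb1.1 hb1.2 hb2.1 hb2.2
        have := hno i
        omega
      omega
    · have hd : ∑ i, φ w i * φ y i = 1 := hrep.adj1 w y hw.2.symm
      by_contra hno
      push_neg at hno
      have hle : ∑ i, φ w i * φ y i ≤ 0 := by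
        apply Finset.sum_nonpos
        intro i _
        have hb1 := hrep.entry w i
        have hb2 := hrep.entry y i
        have := mul_bound hb1.1 hb1.2 hb2.1 hb2.2
        have := hno i
        omega
      omega
  classical
  set f : V → Fin ρ × Fin ρ := fun w =>
    if h : (∃ i, φ w i * φ x i = 1) ∧ (∃ j, φ w j * φ y j = 1)
    then (h.1.choose, h.2.choose) else (i0, i0) with hf
  have hspec : ∀ w ∈ CN, φ w (f w).1 * φ x (f w).1 = 1 ∧ φ w (f w).2 * φ y (f w).2 = 1 := by
    intro w hw
    have h := hex w hw
    simp only [hf, dif_pos h]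
    exact ⟨h.1.choose_spec, h.2.choose_spec⟩
  set sx := Finset.univ.filter (fun i => φ x i ≠ 0) with hsx
  set sy := Finset.univ.filter (fun i => φ y i ≠ 0) with hsy
  have hmaps : ∀ w ∈ CN, f w ∈ sx ×ˢ sy := by
    intro w hw
    have h := hspec w hw
    rw [Finset.mem_product]
    constructor
    · rw [hsx, Finset.mem_filter]
      refine ⟨Finset.mem_univ _, ?_⟩
      intro h0
      rw [h0, mul_zero] at h
      exact absurd h.1 (by norm_num)
    · rw [hsy, Finset.mem_filter]
      refine ⟨Finset.mem_univ _, ?_⟩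
      intro h0
      rw [h0, mul_zero] at h
      exact absurd h.2 (by norm_num)
  have hlt : (sx ×ˢ sy).card < CN.card := by
    rw [Finset.card_product, hsx, hsy, hrep.supp_card x, hrep.supp_card y, hCNcard]
    omega
  obtain ⟨w, hw, w', hw', hww', hfe⟩ :=
    Finset.exists_ne_map_eq_of_card_lt_of_maps_to hlt hmaps
  have hs1 := hspec w hw
  have hs2 := hspec w' hw'
  rw [← hfe] at hs2
  -- φ w i = φ x i = φ w' i, all squares one
  obtain ⟨hwi2, hxi2, hxiw⟩ := sq_one_of_mul_eq_one hs1.1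
  obtain ⟨hwj2, hyj2, hyjw⟩ := sq_one_of_mul_eq_one hs1.2
  obtain ⟨hwi2', _, hxiw'⟩ := sq_one_of_mul_eq_one hs2.1
  obtain ⟨hwj2', _, hyjw'⟩ := sq_one_of_mul_eq_one hs2.2
  set i := (f w).1 with hidef
  set j := (f w).2 with hjdef
  have hx0 : φ x i ≠ 0 := fun hc => by rw [hc] at hxi2; norm_num at hxi2
  have hy0 : φ y j ≠ 0 := fun hc => by rw [hc] at hyj2; norm_num at hyj2
  have hij : i ≠ j := by
    intro he
    have h0 := horth i
    have hy0' : φ y i ≠ 0 := by rw [he]; exact hy0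
    exact mul_ne_zero hx0 hy0' h0
  -- dot of w and w'
  have hdot := hrep.dot01 hww'
  have hsplit := sum_split ({i, j} : Finset (Fin ρ)) (fun t => φ w t * φ w' t)
  rw [sum_over_pair _ hij] at hsplit
  have hii : φ w i * φ w' i = 1 := by rw [← hxiw, ← hxiw']; exact hxi2
  have hjj : φ w j * φ w' j = 1 := by rw [← hyjw, ← hyjw']; exact hyj2
  set rest := ∑ t ∈ Finset.univ \ ({i, j} : Finset (Fin ρ)), φ w t * φ w' t with hrest
  have hrw : ∑ t, φ w t * φ w' t = 2 + rest := by rw [hsplit, hii, hjj]; ring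
  -- rest ≥ -1 by Cauchy-Schwarz on the complement (norms there are 1)
  have hnw : ∑ t ∈ Finset.univ \ ({i, j} : Finset (Fin ρ)), φ w t * φ w t = 1 := by
    rw [hrep.sq_off w, sum_over_pair _ hij, hwi2, hwj2]; ring
  have hnw' : ∑ t ∈ Finset.univ \ ({i, j} : Finset (Fin ρ)), φ w' t * φ w' t = 1 := by
    rw [hrep.sq_off w', sum_over_pair _ hij, hwi2', hwj2']; ring
  have hsm := dot_small _ (φ w) (φ w') (le_of_eq hnw) (le_of_eq hnw')
  have hrestv : rest = -1 := by omega
  have hopp := dot_neg_one_eq _ (φ w) (φ w') (le_of_eq hnw) (le_of_eq hnw') hrestv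
  have heven : ∀ t, 2 ∣ (φ w t - φ w' t) := by
    intro t
    by_cases ht : t ∈ Finset.univ \ ({i, j} : Finset (Fin ρ))
    · have := hopp t ht
      omega
    · simp only [Finset.mem_sdiff, Finset.mem_univ, true_and, Finset.mem_insert,
        Finset.mem_singleton, not_not] at ht
      rcases ht with h | h <;> subst h
      · rw [← hxiw, ← hxiw']; simp
      · rw [← hyjw, ← hyjw']; simp
  exact no_twins hsrg hrep hm hww' heven hxy hnadj


section FourVar

lemma four_var_commons {A B C D : ℤ} (hA1 : -1 ≤ A) (hA2 : A ≤ 1) (hB1 : -1 ≤ B) (hB2 : B ≤ 1)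
    (hC1 : -1 ≤ C) (hC2 : C ≤ 1) (hD1 : -1 ≤ D) (hD2 : D ≤ 1)
    (e1 : A + B + C = 1) (e2 : A - B + D = 1)
    (hn : A * A + B * B + C * C + D * D ≤ 3) :
    (A = 1 ∧ B = 0 ∧ C = 0 ∧ D = 0) ∨ (A = 0 ∧ B = 0 ∧ C = 1 ∧ D = 1) := by
  rcases (by omega : A = -1 ∨ A = 0 ∨ A = 1) with h|h|h <;> subst h <;>
  rcases (by omega : B = -1 ∨ B = 0 ∨ B = 1) with h|h|h <;> subst h <;>
  rcases (by omega : C = -1 ∨ C = 0 ∨ C = 1) with h|h|h <;> subst h <;>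
  rcases (by omega : D = -1 ∨ D = 0 ∨ D = 1) with h|h|h <;> subst h <;> omega

lemma four_var_nbrs {A B C D : ℤ} (hA1 : -1 ≤ A) (hA2 : A ≤ 1) (hB1 : -1 ≤ B) (hB2 : B ≤ 1)
    (hC1 : -1 ≤ C) (hC2 : C ≤ 1) (hD1 : -1 ≤ D) (hD2 : D ≤ 1)
    (e1 : A + B + C = 1) (e2 : A - B + D = 0)
    (hn : A * A + B * B + C * C + D * D ≤ 3) :
    (A = 1 ∧ B = 0 ∧ C = 0 ∧ D = -1) ∨ (A = 0 ∧ B = 1 ∧ C = 0 ∧ D = 1) ∨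
    (A = 0 ∧ B = 0 ∧ C = 1 ∧ D = 0) ∨ (A = 1 ∧ B = 1 ∧ C = -1 ∧ D = 0) := by
  rcases (by omega : A = -1 ∨ A = 0 ∨ A = 1) with h|h|h <;> subst h <;>
  rcases (by omega : B = -1 ∨ B = 0 ∨ B = 1) with h|h|h <;> subst h <;>
  rcases (by omega : C = -1 ∨ C = 0 ∨ C = 1) with h|h|h <;> subst h <;>
  rcases (by omega : D = -1 ∨ D = 0 ∨ D = 1) with h|h|h <;> subst h <;> omega

end FourVar

/-- Data of a "hinge" for a nonadjacent pair x y: coordinates h (hinge, same sign),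
g (anti, opposite signs), p (private to x), q (private to y). -/
structure Hinge (φ : V → Fin ρ → ℤ) (x y : V) where
  h : Fin ρ
  g : Fin ρ
  p : Fin ρ
  q : Fin ρ
  d_hg : h ≠ g
  d_hp : h ≠ p
  d_hq : h ≠ q
  d_gp : g ≠ p
  d_gq : g ≠ q
  d_pq : p ≠ q
  xh2 : φ x h * φ x h = 1
  yh : φ y h = φ x h
  xg2 : φ x g * φ x g = 1
  yg : φ y g = -φ x g
  xp2 : φ x p * φ x p = 1
  yp : φ y p = 0
  yq2 : φ y q * φ y q = 1
  xq : φ x q = 0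
  x0 : ∀ i, i ≠ h → i ≠ g → i ≠ p → φ x i = 0
  y0 : ∀ i, i ≠ h → i ≠ g → i ≠ q → φ y i = 0

/-- every nonadjacent pair has a hinge -/
lemma hinge_exists (hsrg : G.IsSRGWith v k l m) (hrep : Rep G φ) (hm : 10 ≤ m)
    {x y : V} (hxy : x ≠ y) (hnadj : ¬G.Adj x y) : Nonempty (Hinge φ x y) := by
  have hsum : ∑ i, φ x i * φ y i = 0 := hrep.nadj0 x y hxy hnadj
  -- |t| bound : ∑ |t i| ≤ 3
  have habs : ∀ i : Fin ρ, 2 * |φ x i * φ y i| ≤ φ x i * φ x i + φ y i * φ y i := by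
    intro i
    rw [abs_mul]
    nlinarith [abs_mul_abs_self (φ x i), abs_mul_abs_self (φ y i),
      sq_nonneg (|φ x i| - |φ y i|), abs_nonneg (φ x i), abs_nonneg (φ y i)]
  have htabs : ∑ i, |φ x i * φ y i| ≤ 3 := by
    have h1 : ∑ i, 2 * |φ x i * φ y i| ≤ ∑ i, (φ x i * φ x i + φ y i * φ y i) :=
      Finset.sum_le_sum fun i _ => habs i
    rw [Finset.sum_add_distrib, hrep.norm3 x, hrep.norm3 y, ← Finset.mul_sum] at h1
    omega
  -- not all products vanish
  have hnz : ¬ (∀ i, φ x i * φ y i = 0) := fun horth => t0_kill hsrg hrep hm hxy hnadj horth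
  -- the hinge coordinate
  have hbd : ∀ i : Fin ρ, -1 ≤ φ x i * φ y i ∧ φ x i * φ y i ≤ 1 := by
    intro i
    have h1 := hrep.entry x i
    have h2 := hrep.entry y i
    exact mul_bound h1.1 h1.2 h2.1 h2.2
  have hH : ∃ h, φ x h * φ y h = 1 := by
    by_contra hno
    push_neg at hno
    apply hnz
    have hle : ∀ i : Fin ρ, φ x i * φ y i ≤ 0 := by
      intro i
      have := hbd i
      have := hno i
      omega
    have := (Finset.sum_eq_zero_iff_of_nonpos (fun i _ => hle i)).1 hsum
    exact fun i => this i (Finset.mem_univ i)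
  obtain ⟨h, hh⟩ := hH
  have hG : ∃ g, φ x g * φ y g = -1 := by
    by_contra hno
    push_neg at hno
    apply hnz
    have hle : ∀ i : Fin ρ, 0 ≤ φ x i * φ y i := by
      intro i
      have := hbd i
      have := hno i
      omega
    have := (Finset.sum_eq_zero_iff_of_nonneg (fun i _ => hle i)).1 hsum
    exact fun i => this i (Finset.mem_univ i)
  obtain ⟨g, hg⟩ := hG
  have hhg : h ≠ g := by
    intro he
    rw [he, hg] at hh
    norm_num at hh
  -- all other products vanish
  have hoff : ∀ i, i ≠ h → i ≠ g → φ x i * φ y i = 0 := by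
    have h2 : ∑ i ∈ Finset.univ \ ({h, g} : Finset (Fin ρ)), φ x i * φ y i = 0 := by
      have := sum_split ({h, g} : Finset (Fin ρ)) (fun i => φ x i * φ y i)
      rw [hsum, sum_over_pair _ hhg, hh, hg] at this
      omega
    have h1 : ∑ i ∈ Finset.univ \ ({h, g} : Finset (Fin ρ)), |φ x i * φ y i| ≤ 1 := by
      have := sum_split ({h, g} : Finset (Fin ρ)) (fun i => |φ x i * φ y i|)
      rw [sum_over_pair _ hhg, hh, hg] at this
      simp only [abs_one, abs_neg] at this
      omega
    intro i hih hig
    by_contra hne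
    have hmem : i ∈ Finset.univ \ ({h, g} : Finset (Fin ρ)) := by
      simp [hih, hig]
    have habs1 : 1 ≤ |φ x i * φ y i| := by
      have := hbd i
      rcases abs_cases (φ x i * φ y i) with ⟨he, _⟩ | ⟨he, _⟩ <;> omega
    -- all others in the sdiff are 0 in abs
    have hrest : ∑ j ∈ (Finset.univ \ ({h, g} : Finset (Fin ρ))).erase i,
        |φ x j * φ y j| = 0 := by
      have hsplit : ∑ j ∈ (Finset.univ \ ({h, g} : Finset (Fin ρ))).erase i,
          |φ x j * φ y j| + |φ x i * φ y i|
          = ∑ j ∈ Finset.univ \ ({h, g} : Finset (Fin ρ)), |φ x j * φ y j| :=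
        Finset.sum_erase_add (Finset.univ \ ({h, g} : Finset (Fin ρ)))
          (fun j => |φ x j * φ y j|) hmem
      have hnn : 0 ≤ ∑ j ∈ (Finset.univ \ ({h, g} : Finset (Fin ρ))).erase i,
          |φ x j * φ y j| := Finset.sum_nonneg fun j _ => abs_nonneg _
      omega
    have hzero : ∀ j ∈ (Finset.univ \ ({h, g} : Finset (Fin ρ))).erase i,
        φ x j * φ y j = 0 := by
      intro j hj
      have := (Finset.sum_eq_zero_iff_of_nonneg
        (fun j _ => abs_nonneg (φ x j * φ y j))).1 hrest j hj
      exact abs_eq_zero.1 this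
    have : ∑ j ∈ Finset.univ \ ({h, g} : Finset (Fin ρ)), φ x j * φ y j = φ x i * φ y i := by
      have h5 : ∑ j ∈ (Finset.univ \ ({h, g} : Finset (Fin ρ))).erase i,
          φ x j * φ y j + φ x i * φ y i
          = ∑ j ∈ Finset.univ \ ({h, g} : Finset (Fin ρ)), φ x j * φ y j :=
        Finset.sum_erase_add _ _ hmem
      rw [← h5, Finset.sum_eq_zero hzero]
      ring
    rw [h2] at this
    exact hne this.symm
  -- structure of products at h and g
  obtain ⟨xh2, yh2, yhe⟩ := sq_one_of_mul_eq_one hh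
  obtain ⟨xg2, yg2, yge⟩ := sq_one_of_mul_eq_neg_one hg
  -- private coordinate of x
  have hxoff : ∑ i ∈ Finset.univ \ ({h, g} : Finset (Fin ρ)), φ x i * φ x i = 1 := by
    rw [hrep.sq_off x, sum_over_pair _ hhg, xh2, xg2]
    ring
  have hpex : ∃ p ∈ Finset.univ \ ({h, g} : Finset (Fin ρ)), φ x p ≠ 0 := by
    by_contra hno
    push_neg at hno
    rw [Finset.sum_eq_zero (fun i hi => by rw [hno i hi, mul_zero])] at hxoff
    norm_num at hxoff
  obtain ⟨p, hpmem, hpne⟩ := hpex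
  have hpd : p ≠ h ∧ p ≠ g := by
    simp only [Finset.mem_sdiff, Finset.mem_univ, true_and, Finset.mem_insert,
      Finset.mem_singleton, not_or] at hpmem
    exact hpmem
  have xp2 : φ x p * φ x p = 1 := by
    have := hrep.entry x p
    have : φ x p = -1 ∨ φ x p = 1 := by omega
    rcases this with he | he <;> rw [he] <;> norm_num
  have yp0 : φ y p = 0 :=
    eq_zero_of_mul_self_one_of_mul_zero xp2 (hoff p hpd.1 hpd.2)
  have hx0 : ∀ i, i ≠ h → i ≠ g → i ≠ p → φ x i = 0 := by
    intro i hih hig hip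
    have h3 : ∑ i ∈ Finset.univ \ ({h, g, p} : Finset (Fin ρ)), φ x i * φ x i = 0 := by
      rw [hrep.sq_off x, sum_over_three _ hhg (Ne.symm hpd.1) (Ne.symm hpd.2), xh2, xg2, xp2]
      ring
    have hmem : i ∈ Finset.univ \ ({h, g, p} : Finset (Fin ρ)) := by simp [hih, hig, hip]
    have := (Finset.sum_eq_zero_iff_of_nonneg
      (fun j _ => mul_self_nonneg (φ x j))).1 h3 i hmem
    nlinarith [this]
  -- private coordinate of y
  have hyoff : ∑ i ∈ Finset.univ \ ({h, g} : Finset (Fin ρ)), φ y i * φ y i = 1 := by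
    rw [hrep.sq_off y, sum_over_pair _ hhg, yh2, yg2]
    ring
  have hqex : ∃ q ∈ Finset.univ \ ({h, g} : Finset (Fin ρ)), φ y q ≠ 0 := by
    by_contra hno
    push_neg at hno
    rw [Finset.sum_eq_zero (fun i hi => by rw [hno i hi, mul_zero])] at hyoff
    norm_num at hyoff
  obtain ⟨q, hqmem, hqne⟩ := hqex
  have hqd : q ≠ h ∧ q ≠ g := by
    simp only [Finset.mem_sdiff, Finset.mem_univ, true_and, Finset.mem_insert,
      Finset.mem_singleton, not_or] at hqmem
    exact hqmem
  have yq2 : φ y q * φ y q = 1 := by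
    have := hrep.entry y q
    have : φ y q = -1 ∨ φ y q = 1 := by omega
    rcases this with he | he <;> rw [he] <;> norm_num
  have xq0 : φ x q = 0 := by
    have h0 := hoff q hqd.1 hqd.2
    rcases mul_eq_zero.1 h0 with he | he
    · exact he
    · exact absurd he hqne
  have hy0 : ∀ i, i ≠ h → i ≠ g → i ≠ q → φ y i = 0 := by
    intro i hih hig hiq
    have h3 : ∑ i ∈ Finset.univ \ ({h, g, q} : Finset (Fin ρ)), φ y i * φ y i = 0 := by
      rw [hrep.sq_off y, sum_over_three _ hhg (Ne.symm hqd.1) (Ne.symm hqd.2), yh2, yg2, yq2]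
      ring
    have hmem : i ∈ Finset.univ \ ({h, g, q} : Finset (Fin ρ)) := by simp [hih, hig, hiq]
    have := (Finset.sum_eq_zero_iff_of_nonneg
      (fun j _ => mul_self_nonneg (φ y j))).1 h3 i hmem
    nlinarith [this]
  have hpq : p ≠ q := by
    intro he
    rw [← he] at xq0
    exact hpne xq0
  exact ⟨⟨h, g, p, q, hhg, Ne.symm hpd.1, Ne.symm hqd.1, Ne.symm hpd.2, Ne.symm hqd.2, hpq,
    xh2, yhe, xg2, yge, xp2, yp0, yq2, xq0, hx0, hy0⟩⟩

/-- Two distinct vertices whose vectors agree at two common nonzero coordinates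
are impossible. -/
lemma share_two (hsrg : G.IsSRGWith v k l m) (hrep : Rep G φ) (hm : 10 ≤ m)
    {a b : V} (hab : a ≠ b) (hnab : ¬G.Adj a b)
    {w w' : V} (hww' : w ≠ w') {s t : Fin ρ} (hst : s ≠ t)
    (hs : φ w s ≠ 0) (ht : φ w t ≠ 0) (hes : φ w' s = φ w s) (het : φ w' t = φ w t) :
    False := by
  have hs2 : φ w s * φ w s = 1 := by
    have := hrep.entry w s
    have : φ w s = -1 ∨ φ w s = 1 := by omega
    rcases this with he | he <;> rw [he] <;> norm_num
  have ht2 : φ w t * φ w t = 1 := by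
    have := hrep.entry w t
    have : φ w t = -1 ∨ φ w t = 1 := by omega
    rcases this with he | he <;> rw [he] <;> norm_num
  have hdot := hrep.dot01 hww'
  have hsplit := sum_split ({s, t} : Finset (Fin ρ)) (fun i => φ w i * φ w' i)
  rw [sum_over_pair _ hst] at hsplit
  set rest := ∑ i ∈ Finset.univ \ ({s, t} : Finset (Fin ρ)), φ w i * φ w' i with hrest
  have hss : φ w s * φ w' s = 1 := by rw [hes]; exact hs2
  have htt : φ w t * φ w' t = 1 := by rw [het]; exact ht2
  have hrw : ∑ i, φ w i * φ w' i = 2 + rest := by rw [hsplit, hss, htt]; ring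
  have hnw : ∑ i ∈ Finset.univ \ ({s, t} : Finset (Fin ρ)), φ w i * φ w i = 1 := by
    rw [hrep.sq_off w, sum_over_pair _ hst, hs2, ht2]; ring
  have hnw' : ∑ i ∈ Finset.univ \ ({s, t} : Finset (Fin ρ)), φ w' i * φ w' i = 1 := by
    rw [hrep.sq_off w', sum_over_pair _ hst, hes, het, hs2, ht2]; ring
  have hsm := dot_small _ (φ w) (φ w') (le_of_eq hnw) (le_of_eq hnw')
  have hrestv : rest = -1 := by omega
  have hopp := dot_neg_one_eq _ (φ w) (φ w') (le_of_eq hnw) (le_of_eq hnw') hrestv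
  have heven : ∀ i, 2 ∣ (φ w i - φ w' i) := by
    intro i
    by_cases hi : i ∈ Finset.univ \ ({s, t} : Finset (Fin ρ))
    · have := hopp i hi
      omega
    · simp only [Finset.mem_sdiff, Finset.mem_univ, true_and, Finset.mem_insert,
        Finset.mem_singleton, not_not] at hi
      rcases hi with he | he <;> subst he
      · rw [hes]; simp
      · rw [het]; simp
  exact no_twins hsrg hrep hm hww' heven hab hnab

/-- Two distinct vertices with pointwise disjoint vectors are impossible. -/
lemma disjoint_kill (hsrg : G.IsSRGWith v k l m) (hrep : Rep G φ) (hm : 10 ≤ m)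
    {w w' : V} (hne : w ≠ w') (horth : ∀ i, φ w i * φ w' i = 0) : False := by
  have hdot : ∑ i, φ w i * φ w' i = 0 := Finset.sum_eq_zero fun i _ => horth i
  exact t0_kill hsrg hrep hm hne (hrep.nadj_of_dot_zero hdot) horth

section Extraction

lemma exists_single_support (f : Fin ρ → ℤ) (S : Finset (Fin ρ))
    (hsum : ∑ i ∈ S, f i * f i = 1) :
    ∃ s ∈ S, f s ≠ 0 ∧ ∀ i ∈ S, i ≠ s → f i = 0 := by
  have hex : ∃ s ∈ S, f s ≠ 0 := by
    by_contra hno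
    push_neg at hno
    rw [Finset.sum_eq_zero (fun i hi => by rw [hno i hi, mul_zero])] at hsum
    norm_num at hsum
  obtain ⟨s, hsS, hs⟩ := hex
  have hs1 : 1 ≤ f s * f s := by rcases lt_or_gt_of_ne hs with h | h <;> nlinarith
  have hsplit : ∑ i ∈ S.erase s, f i * f i + f s * f s = ∑ i ∈ S, f i * f i :=
    Finset.sum_erase_add S (fun i => f i * f i) hsS
  have hrest : ∑ i ∈ S.erase s, f i * f i ≤ 0 := by omega
  have hnn : ∀ i ∈ S.erase s, 0 ≤ f i * f i := fun i _ => mul_self_nonneg _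
  have hz : ∀ i ∈ S.erase s, f i * f i = 0 :=
    (Finset.sum_eq_zero_iff_of_nonneg hnn).1 (le_antisymm hrest (Finset.sum_nonneg hnn))
  refine ⟨s, hsS, hs, fun i hiS his => ?_⟩
  have := hz i (Finset.mem_erase.2 ⟨his, hiS⟩)
  nlinarith [this]

lemma exists_double_support (f : Fin ρ → ℤ) (S : Finset (Fin ρ))
    (hsum : ∑ i ∈ S, f i * f i = 2) :
    ∃ s₁ ∈ S, ∃ s₂ ∈ S, s₁ ≠ s₂ ∧ f s₁ ≠ 0 ∧ f s₂ ≠ 0 ∧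
      ∀ i ∈ S, i ≠ s₁ → i ≠ s₂ → f i = 0 := by
  have hex : ∃ s ∈ S, f s ≠ 0 := by
    by_contra hno
    push_neg at hno
    rw [Finset.sum_eq_zero (fun i hi => by rw [hno i hi, mul_zero])] at hsum
    norm_num at hsum
  obtain ⟨s₁, hs1S, hs1⟩ := hex
  have hb : -1 ≤ f s₁ ∧ f s₁ ≤ 1 := by
    constructor <;> nlinarith [Finset.single_le_sum (f := fun i => f i * f i)
      (fun i _ => mul_self_nonneg (f i)) hs1S]
  have hsq : f s₁ * f s₁ = 1 := by
    have : f s₁ = -1 ∨ f s₁ = 1 := by omega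
    rcases this with he | he <;> rw [he] <;> norm_num
  have hsplit : ∑ i ∈ S.erase s₁, f i * f i + f s₁ * f s₁ = ∑ i ∈ S, f i * f i :=
    Finset.sum_erase_add S (fun i => f i * f i) hs1S
  have hrest : ∑ i ∈ S.erase s₁, f i * f i = 1 := by omega
  obtain ⟨s₂, hs2mem, hs2, hz⟩ := exists_single_support f (S.erase s₁) hrest
  have hs2S : s₂ ∈ S := Finset.mem_of_mem_erase hs2mem
  have hne : s₁ ≠ s₂ := fun he => (Finset.mem_erase.1 hs2mem).1 he.symm
  refine ⟨s₁, hs1S, s₂, hs2S, hne, hs1, hs2, fun i hiS hi1 hi2 => ?_⟩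
  exact hz i (Finset.mem_erase.2 ⟨hi1, hiS⟩) hi2

end Extraction

section Classify

variable {x y : V}

lemma dot_x (hd : Hinge φ x y) (w : V) :
    ∑ i, φ w i * φ x i
      = φ w hd.h * φ x hd.h + φ w hd.g * φ x hd.g + φ w hd.p * φ x hd.p := by
  rw [sum_split ({hd.h, hd.g, hd.p} : Finset (Fin ρ)) (fun i => φ w i * φ x i),
    sum_over_three _ hd.d_hg hd.d_hp hd.d_gp]
  have h0 : ∑ i ∈ Finset.univ \ ({hd.h, hd.g, hd.p} : Finset (Fin ρ)), φ w i * φ x i = 0 := by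
    apply Finset.sum_eq_zero
    intro i hi
    simp only [Finset.mem_sdiff, Finset.mem_univ, true_and, Finset.mem_insert,
      Finset.mem_singleton, not_or] at hi
    rw [hd.x0 i hi.1 hi.2.1 hi.2.2, mul_zero]
  rw [h0]
  ring

lemma dot_y (hd : Hinge φ x y) (w : V) :
    ∑ i, φ w i * φ y i
      = φ w hd.h * φ x hd.h - φ w hd.g * φ x hd.g + φ w hd.q * φ y hd.q := by
  rw [sum_split ({hd.h, hd.g, hd.q} : Finset (Fin ρ)) (fun i => φ w i * φ y i),
    sum_over_three _ hd.d_hg hd.d_hq hd.d_gq]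
  have h0 : ∑ i ∈ Finset.univ \ ({hd.h, hd.g, hd.q} : Finset (Fin ρ)), φ w i * φ y i = 0 := by
    apply Finset.sum_eq_zero
    intro i hi
    simp only [Finset.mem_sdiff, Finset.mem_univ, true_and, Finset.mem_insert,
      Finset.mem_singleton, not_or] at hi
    rw [hd.y0 i hi.1 hi.2.1 hi.2.2, mul_zero]
  rw [h0, hd.yh, hd.yg]
  ring

lemma norm_four (hrep : Rep G φ) (hd : Hinge φ x y) (w : V) :
    φ w hd.h * φ w hd.h + φ w hd.g * φ w hd.g + φ w hd.p * φ w hd.p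
      + φ w hd.q * φ w hd.q ≤ 3 := by
  have hoff := hrep.sq_off w ({hd.h, hd.g, hd.p, hd.q} : Finset (Fin ρ))
  rw [sum_over_four _ hd.d_hg hd.d_hp hd.d_hq hd.d_gp hd.d_gq hd.d_pq] at hoff
  have hnn : (0:ℤ) ≤ ∑ i ∈ Finset.univ \ ({hd.h, hd.g, hd.p, hd.q} : Finset (Fin ρ)),
      φ w i * φ w i := Finset.sum_nonneg fun i _ => mul_self_nonneg _
  omega

lemma abcd_bounds (hrep : Rep G φ) (hd : Hinge φ x y) (w : V) :
    (-1 ≤ φ w hd.h * φ x hd.h ∧ φ w hd.h * φ x hd.h ≤ 1) ∧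
    (-1 ≤ φ w hd.g * φ x hd.g ∧ φ w hd.g * φ x hd.g ≤ 1) ∧
    (-1 ≤ φ w hd.p * φ x hd.p ∧ φ w hd.p * φ x hd.p ≤ 1) ∧
    (-1 ≤ φ w hd.q * φ y hd.q ∧ φ w hd.q * φ y hd.q ≤ 1) := by
  have b1 := hrep.entry w hd.h
  have b2 := hrep.entry x hd.h
  have b3 := hrep.entry w hd.g
  have b4 := hrep.entry x hd.g
  have b5 := hrep.entry w hd.p
  have b6 := hrep.entry x hd.p
  have b7 := hrep.entry w hd.q
  have b8 := hrep.entry y hd.q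
  exact ⟨mul_bound b1.1 b1.2 b2.1 b2.2, mul_bound b3.1 b3.2 b4.1 b4.2,
    mul_bound b5.1 b5.2 b6.1 b6.2, mul_bound b7.1 b7.2 b8.1 b8.2⟩

lemma abcd_sq (hrep : Rep G φ) (hd : Hinge φ x y) (w : V) :
    (φ w hd.h * φ x hd.h) * (φ w hd.h * φ x hd.h) +
    (φ w hd.g * φ x hd.g) * (φ w hd.g * φ x hd.g) +
    (φ w hd.p * φ x hd.p) * (φ w hd.p * φ x hd.p) +
    (φ w hd.q * φ y hd.q) * (φ w hd.q * φ y hd.q) ≤ 3 := by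
  have h1 : (φ w hd.h * φ x hd.h) * (φ w hd.h * φ x hd.h)
      = (φ w hd.h * φ w hd.h) * (φ x hd.h * φ x hd.h) := by ring
  have h2 : (φ w hd.g * φ x hd.g) * (φ w hd.g * φ x hd.g)
      = (φ w hd.g * φ w hd.g) * (φ x hd.g * φ x hd.g) := by ring
  have h3 : (φ w hd.p * φ x hd.p) * (φ w hd.p * φ x hd.p)
      = (φ w hd.p * φ w hd.p) * (φ x hd.p * φ x hd.p) := by ring
  have h4 : (φ w hd.q * φ y hd.q) * (φ w hd.q * φ y hd.q)
      = (φ w hd.q * φ w hd.q) * (φ y hd.q * φ y hd.q) := by ring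
  rw [h1, h2, h3, h4, hd.xh2, hd.xg2, hd.xp2, hd.yq2, mul_one, mul_one, mul_one, mul_one]
  exact norm_four hrep hd w

/-- classification of common neighbours of a nonadjacent pair -/
lemma common_types (hrep : Rep G φ) (hd : Hinge φ x y) {w : V}
    (hwx : G.Adj x w) (hwy : G.Adj y w) :
    (φ w hd.h = φ x hd.h ∧ φ w hd.g = 0 ∧ φ w hd.p = 0 ∧ φ w hd.q = 0) ∨
    (φ w hd.h = 0 ∧ φ w hd.g = 0 ∧ φ w hd.p = φ x hd.p ∧ φ w hd.q = φ y hd.q) := by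
  have e1 : φ w hd.h * φ x hd.h + φ w hd.g * φ x hd.g + φ w hd.p * φ x hd.p = 1 := by
    rw [← dot_x hd w]
    exact hrep.adj1 w x hwx.symm
  have e2 : φ w hd.h * φ x hd.h - φ w hd.g * φ x hd.g + φ w hd.q * φ y hd.q = 1 := by
    rw [← dot_y hd w]
    exact hrep.adj1 w y hwy.symm
  obtain ⟨hbA, hbB, hbC, hbD⟩ := abcd_bounds hrep hd w
  have hsq := abcd_sq hrep hd w
  rcases four_var_commons hbA.1 hbA.2 hbB.1 hbB.2 hbC.1 hbC.2 hbD.1 hbD.2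
    (by linarith) (by linarith) hsq with ⟨hA, hB, hC, hD⟩ | ⟨hA, hB, hC, hD⟩
  · left
    refine ⟨eq_of_mul_self_one_of_mul_one hd.xh2 (by rw [mul_comm]; exact hA), ?_, ?_, ?_⟩
    · exact eq_zero_of_mul_self_one_of_mul_zero hd.xg2 (by rw [mul_comm]; exact hB)
    · exact eq_zero_of_mul_self_one_of_mul_zero hd.xp2 (by rw [mul_comm]; exact hC)
    · exact eq_zero_of_mul_self_one_of_mul_zero hd.yq2 (by rw [mul_comm]; exact hD)
  · right
    refine ⟨?_, ?_, ?_, ?_⟩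
    · exact eq_zero_of_mul_self_one_of_mul_zero hd.xh2 (by rw [mul_comm]; exact hA)
    · exact eq_zero_of_mul_self_one_of_mul_zero hd.xg2 (by rw [mul_comm]; exact hB)
    · exact eq_of_mul_self_one_of_mul_one hd.xp2 (by rw [mul_comm]; exact hC)
    · exact eq_of_mul_self_one_of_mul_one hd.yq2 (by rw [mul_comm]; exact hD)

/-- classification of neighbours of x that are not neighbours of y -/
lemma nbr_types (hsrg : G.IsSRGWith v k l m) (hrep : Rep G φ) (hm : 10 ≤ m)
    (hxy : x ≠ y) (hnadj : ¬G.Adj x y) (hd : Hinge φ x y) {w : V}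
    (hwx : G.Adj x w) (hwny : ¬ G.Adj y w) (hwney : w ≠ y) :
    (φ w hd.h = φ x hd.h ∧ φ w hd.g = 0 ∧ φ w hd.p = 0 ∧ φ w hd.q = -φ y hd.q) ∨
    (φ w hd.h = 0 ∧ φ w hd.g = φ x hd.g ∧ φ w hd.p = 0 ∧ φ w hd.q = φ y hd.q) ∨
    (φ w hd.h = 0 ∧ φ w hd.g = 0 ∧ φ w hd.p = φ x hd.p ∧ φ w hd.q = 0) := by
  have e1 : φ w hd.h * φ x hd.h + φ w hd.g * φ x hd.g + φ w hd.p * φ x hd.p = 1 := by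
    rw [← dot_x hd w]
    exact hrep.adj1 w x hwx.symm
  have e2 : φ w hd.h * φ x hd.h - φ w hd.g * φ x hd.g + φ w hd.q * φ y hd.q = 0 := by
    rw [← dot_y hd w]
    exact hrep.nadj0 w y hwney (fun ha => hwny ha.symm)
  obtain ⟨hbA, hbB, hbC, hbD⟩ := abcd_bounds hrep hd w
  have hsq := abcd_sq hrep hd w
  rcases four_var_nbrs hbA.1 hbA.2 hbB.1 hbB.2 hbC.1 hbC.2 hbD.1 hbD.2
    (by linarith) (by linarith) hsq with ⟨hA, hB, hC, hD⟩ | ⟨hA, hB, hC, hD⟩ |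
    ⟨hA, hB, hC, hD⟩ | ⟨hA, hB, hC, hD⟩
  · left
    refine ⟨eq_of_mul_self_one_of_mul_one hd.xh2 (by rw [mul_comm]; exact hA),
      eq_zero_of_mul_self_one_of_mul_zero hd.xg2 (by rw [mul_comm]; exact hB),
      eq_zero_of_mul_self_one_of_mul_zero hd.xp2 (by rw [mul_comm]; exact hC),
      neg_of_mul_self_one_of_mul_neg_one hd.yq2 (by rw [mul_comm]; exact hD)⟩
  · right; left
    refine ⟨eq_zero_of_mul_self_one_of_mul_zero hd.xh2 (by rw [mul_comm]; exact hA),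
      eq_of_mul_self_one_of_mul_one hd.xg2 (by rw [mul_comm]; exact hB),
      eq_zero_of_mul_self_one_of_mul_zero hd.xp2 (by rw [mul_comm]; exact hC),
      eq_of_mul_self_one_of_mul_one hd.yq2 (by rw [mul_comm]; exact hD)⟩
  · right; right
    refine ⟨eq_zero_of_mul_self_one_of_mul_zero hd.xh2 (by rw [mul_comm]; exact hA),
      eq_zero_of_mul_self_one_of_mul_zero hd.xg2 (by rw [mul_comm]; exact hB),
      eq_of_mul_self_one_of_mul_one hd.xp2 (by rw [mul_comm]; exact hC),
      eq_zero_of_mul_self_one_of_mul_zero hd.yq2 (by rw [mul_comm]; exact hD)⟩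
  -- fourth type: twin of x, impossible
  · exfalso
    have hwh : φ w hd.h = φ x hd.h :=
      eq_of_mul_self_one_of_mul_one hd.xh2 (by rw [mul_comm]; exact hA)
    have hwg : φ w hd.g = φ x hd.g :=
      eq_of_mul_self_one_of_mul_one hd.xg2 (by rw [mul_comm]; exact hB)
    have hwp : φ w hd.p = -φ x hd.p :=
      neg_of_mul_self_one_of_mul_neg_one hd.xp2 (by rw [mul_comm]; exact hC)
    have hwq : φ w hd.q = 0 :=
      eq_zero_of_mul_self_one_of_mul_zero hd.yq2 (by rw [mul_comm]; exact hD)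
    -- residual of w vanishes
    have hoff := hrep.sq_off w ({hd.h, hd.g, hd.p, hd.q} : Finset (Fin ρ))
    rw [sum_over_four _ hd.d_hg hd.d_hp hd.d_hq hd.d_gp hd.d_gq hd.d_pq, hwh, hwg, hwp, hwq,
      hd.xh2, hd.xg2] at hoff
    have hpp : -φ x hd.p * -φ x hd.p = 1 := by
      have := hd.xp2
      nlinarith [this]
    rw [hpp] at hoff
    have hoff0 : ∑ i ∈ Finset.univ \ ({hd.h, hd.g, hd.p, hd.q} : Finset (Fin ρ)),
        φ w i * φ w i = 0 := by omega
    have hresid : ∀ i, i ≠ hd.h → i ≠ hd.g → i ≠ hd.p → i ≠ hd.q → φ w i = 0 := by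
      intro i h1 h2 h3 h4
      have hmem : i ∈ Finset.univ \ ({hd.h, hd.g, hd.p, hd.q} : Finset (Fin ρ)) := by
        simp [h1, h2, h3, h4]
      have := (Finset.sum_eq_zero_iff_of_nonneg
        (fun j _ => mul_self_nonneg (φ w j))).1 hoff0 i hmem
      nlinarith [this]
    have hwx' : w ≠ x := fun he => by
      rw [he] at hwp
      have := hd.xp2
      nlinarith [hwp, this]
    have heven : ∀ i, 2 ∣ (φ w i - φ x i) := by
      intro i
      by_cases h1 : i = hd.h
      · subst h1; rw [hwh]; simp
      by_cases h2 : i = hd.g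
      · subst h2; rw [hwg]; simp
      by_cases h3 : i = hd.p
      · subst h3; rw [hwp]; omega
      by_cases h4 : i = hd.q
      · subst h4; rw [hwq, hd.xq]; norm_num
      · rw [hresid i h1 h2 h3 h4, hd.x0 i h1 h2 h3]; norm_num
    exact no_twins hsrg hrep hm hwx' heven hxy hnadj

end Classify

section Pick

lemma filter_card_le_one (hsrg : G.IsSRGWith v k l m) (hrep : Rep G φ) (hm : 10 ≤ m)
    {a b : V} (hab : a ≠ b) (hnab : ¬G.Adj a b)
    {t0 s : Fin ρ} (hts : t0 ≠ s) {c c' : ℤ} (hc : c ≠ 0) (hc' : c' ≠ 0) (W : Finset V)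
    (hanc : ∀ w ∈ W, φ w t0 = c) :
    (W.filter (fun w => φ w s = c')).card ≤ 1 := by
  rw [Finset.card_le_one]
  intro w hw w' hw'
  simp only [Finset.mem_filter] at hw hw'
  by_contra hne
  exact share_two hsrg hrep hm hab hnab hne hts
    (by rw [hanc w hw.1]; exact hc) (by rw [hw.2]; exact hc')
    (by rw [hanc w' hw'.1, hanc w hw.1]) (by rw [hw'.2, hw.2])

lemma filter_card_le_two (hsrg : G.IsSRGWith v k l m) (hrep : Rep G φ) (hm : 10 ≤ m)
    {a b : V} (hab : a ≠ b) (hnab : ¬G.Adj a b)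
    {t0 s : Fin ρ} (hts : t0 ≠ s) {c : ℤ} (hc : c ≠ 0) (W : Finset V)
    (hanc : ∀ w ∈ W, φ w t0 = c) :
    (W.filter (fun w => φ w s ≠ 0)).card ≤ 2 := by
  have hsub : W.filter (fun w => φ w s ≠ 0) ⊆
      W.filter (fun w => φ w s = 1) ∪ W.filter (fun w => φ w s = -1) := by
    intro w hw
    simp only [Finset.mem_filter] at hw
    have hb := hrep.entry w s
    have : φ w s = 1 ∨ φ w s = -1 := by omega
    rcases this with h | h
    · exact Finset.mem_union_left _ (Finset.mem_filter.2 ⟨hw.1, h⟩)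
    · exact Finset.mem_union_right _ (Finset.mem_filter.2 ⟨hw.1, h⟩)
  calc (W.filter (fun w => φ w s ≠ 0)).card
      ≤ (W.filter (fun w => φ w s = 1) ∪ W.filter (fun w => φ w s = -1)).card :=
        Finset.card_le_card hsub
    _ ≤ (W.filter (fun w => φ w s = 1)).card + (W.filter (fun w => φ w s = -1)).card :=
        Finset.card_union_le _ _
    _ ≤ 2 := by
        have h1 := filter_card_le_one hsrg hrep hm hab hnab hts hc (by norm_num : (1:ℤ) ≠ 0)
          W hanc
        have h2 := filter_card_le_one hsrg hrep hm hab hnab hts hc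
          (by norm_num : (-1:ℤ) ≠ 0) W hanc
        omega

lemma pick_avoid_one (hsrg : G.IsSRGWith v k l m) (hrep : Rep G φ) (hm : 10 ≤ m)
    {a b : V} (hab : a ≠ b) (hnab : ¬G.Adj a b)
    {t0 s : Fin ρ} (hts : t0 ≠ s) {c : ℤ} (hc : c ≠ 0) (W : Finset V)
    (hanc : ∀ w ∈ W, φ w t0 = c) (hcard : 3 ≤ W.card) :
    ∃ w ∈ W, φ w s = 0 := by
  by_contra hno
  push_neg at hno
  have : W.filter (fun w => φ w s ≠ 0) = W := Finset.filter_true_of_mem hno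
  have h2 := filter_card_le_two hsrg hrep hm hab hnab hts hc W hanc
  rw [this] at h2
  omega

lemma pick_avoid_two (hsrg : G.IsSRGWith v k l m) (hrep : Rep G φ) (hm : 10 ≤ m)
    {a b : V} (hab : a ≠ b) (hnab : ¬G.Adj a b)
    {t0 s₁ s₂ : Fin ρ} (hts1 : t0 ≠ s₁) (hts2 : t0 ≠ s₂) {c : ℤ} (hc : c ≠ 0) (W : Finset V)
    (hanc : ∀ w ∈ W, φ w t0 = c) (hcard : 5 ≤ W.card) :
    ∃ w ∈ W, φ w s₁ = 0 ∧ φ w s₂ = 0 := by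
  have hsplit := Finset.card_filter_add_card_filter_not
    (s := W) (p := fun w => φ w s₁ = 0)
  have h2 := filter_card_le_two hsrg hrep hm hab hnab hts1 hc W hanc
  have hco : (W.filter (fun w => ¬ φ w s₁ = 0)).card
      = (W.filter (fun w => φ w s₁ ≠ 0)).card := rfl
  rw [hco] at hsplit
  have hW'card : 3 ≤ (W.filter (fun w => φ w s₁ = 0)).card := by omega
  have hanc' : ∀ w ∈ W.filter (fun w => φ w s₁ = 0), φ w t0 = c :=
    fun w hw => hanc w (Finset.mem_of_mem_filter w hw)
  obtain ⟨w, hw, hw2⟩ := pick_avoid_one hsrg hrep hm hab hnab hts2 hc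
    (W.filter (fun w => φ w s₁ = 0)) hanc' hW'card
  exact ⟨w, Finset.mem_of_mem_filter w hw, (Finset.mem_filter.1 hw).2, hw2⟩

end Pick

/-- KEY LEMMA: if there is a nonadjacent pair, then k = m. -/
lemma k_eq_m (hsrg : G.IsSRGWith v k l m) (hrep : Rep G φ) (hm : 10 ≤ m)
    {x y : V} (hxy : x ≠ y) (hnadj : ¬G.Adj x y) : k = m := by
  obtain ⟨hd⟩ := hinge_exists hsrg hrep hm hxy hnadj
  have hxh0 : φ x hd.h ≠ 0 := fun hc => by have h2 := hd.xh2; rw [hc] at h2; norm_num at h2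
  have hxg0 : φ x hd.g ≠ 0 := fun hc => by have h2 := hd.xg2; rw [hc] at h2; norm_num at h2
  have hxp0 : φ x hd.p ≠ 0 := fun hc => by have h2 := hd.xp2; rw [hc] at h2; norm_num at h2
  have hyq0 : φ y hd.q ≠ 0 := fun hc => by have h2 := hd.yq2; rw [hc] at h2; norm_num at h2
  have hmemCN : ∀ w, w ∈ (G.commonNeighbors x y).toFinset ↔ (G.Adj x w ∧ G.Adj y w) := by
    intro w
    rw [Set.mem_toFinset, SimpleGraph.mem_commonNeighbors]
  have hCNcard : (G.commonNeighbors x y).toFinset.card = m := by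
    rw [Set.toFinset_card]
    exact hsrg.of_not_adj hxy hnadj
  set CN := (G.commonNeighbors x y).toFinset with hCNdef
  set W1 := CN.filter (fun w => φ w hd.h = φ x hd.h) with hW1def
  set T2 := CN.filter (fun w => ¬ φ w hd.h = φ x hd.h) with hT2def
  -- TypeII commons are pairwise equal
  have hT2card : T2.card ≤ 1 := by
    rw [Finset.card_le_one]
    intro w hw w' hw'
    rw [hT2def, Finset.mem_filter] at hw hw'
    have h1 := (hmemCN w).1 hw.1
    have h1' := (hmemCN w').1 hw'.1
    rcases common_types hrep hd h1.1 h1.2 with hI | hII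
    · exact absurd hI.1 hw.2
    rcases common_types hrep hd h1'.1 h1'.2 with hI' | hII'
    · exact absurd hI'.1 hw'.2
    by_contra hne
    exact share_two hsrg hrep hm hxy hnadj hne hd.d_pq
      (by rw [hII.2.2.1]; exact hxp0) (by rw [hII.2.2.2]; exact hyq0)
      (by rw [hII'.2.2.1, hII.2.2.1]) (by rw [hII'.2.2.2, hII.2.2.2])
  have hsubCN : CN ⊆ W1 ∪ T2 := by
    intro w hw
    by_cases hc : φ w hd.h = φ x hd.h
    · exact Finset.mem_union_left _ (by rw [hW1def]; exact Finset.mem_filter.2 ⟨hw, hc⟩)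
    · exact Finset.mem_union_right _ (by rw [hT2def]; exact Finset.mem_filter.2 ⟨hw, hc⟩)
  have hW1card9 : 9 ≤ W1.card := by
    have h1 : CN.card ≤ (W1 ∪ T2).card := Finset.card_le_card hsubCN
    have h2 := Finset.card_union_le W1 T2
    omega
  have hW1I : ∀ w ∈ W1, φ w hd.h = φ x hd.h ∧ φ w hd.g = 0 ∧ φ w hd.p = 0 ∧ φ w hd.q = 0 := by
    intro w hw
    rw [hW1def, Finset.mem_filter] at hw
    have h1 := (hmemCN w).1 hw.1
    rcases common_types hrep hd h1.1 h1.2 with hI | hII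
    · exact hI
    · exact absurd (hw.2.symm.trans hII.1) hxh0
  have hanchor : ∀ w ∈ W1, φ w hd.h = φ x hd.h := fun w hw => (hW1I w hw).1
  have hW1adj : ∀ w ∈ W1, G.Adj x w ∧ G.Adj y w := by
    intro w hw
    rw [hW1def, Finset.mem_filter] at hw
    exact (hmemCN w).1 hw.1
  -- TypeII commons do not exist at all
  have hT2empty : ∀ w ∈ CN, φ w hd.h = φ x hd.h := by
    intro n hn
    by_contra hnI
    have h1 := (hmemCN n).1 hn
    rcases common_types hrep hd h1.1 h1.2 with hI | hII
    · exact hnI hI.1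
    exfalso
    have hressum : ∑ i ∈ Finset.univ \ ({hd.h, hd.g, hd.p, hd.q} : Finset (Fin ρ)),
        φ n i * φ n i = 1 := by
      have hoff := hrep.sq_off n ({hd.h, hd.g, hd.p, hd.q} : Finset (Fin ρ))
      rw [sum_over_four _ hd.d_hg hd.d_hp hd.d_hq hd.d_gp hd.d_gq hd.d_pq,
        hII.1, hII.2.1, hII.2.2.1, hII.2.2.2, hd.xp2, hd.yq2] at hoff
      exact hoff.trans (by norm_num)
    obtain ⟨s, hsS, hs0, hsz⟩ := exists_single_support (φ n) _ hressum
    have hsd : s ≠ hd.h ∧ (s ≠ hd.g ∧ s ≠ hd.p ∧ s ≠ hd.q) := by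
      simpa using (Finset.mem_sdiff.1 hsS).2
    obtain ⟨w₀, hw₀, hw₀s⟩ := pick_avoid_one hsrg hrep hm hxy hnadj (Ne.symm hsd.1) hxh0
      W1 hanchor (by omega)
    have hw₀I := hW1I w₀ hw₀
    have hne : n ≠ w₀ := by
      intro he
      rw [he] at hII
      exact hxh0 (hw₀I.1.symm.trans hII.1)
    apply disjoint_kill hsrg hrep hm hne
    intro i
    by_cases h1i : i = hd.h
    · rw [h1i, hII.1, zero_mul]
    by_cases h2i : i = hd.g
    · rw [h2i, hII.2.1, zero_mul]
    by_cases h3i : i = hd.p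
    · rw [h3i, hw₀I.2.2.1, mul_zero]
    by_cases h4i : i = hd.q
    · rw [h4i, hw₀I.2.2.2, mul_zero]
    by_cases h5i : i = s
    · rw [h5i, hw₀s, mul_zero]
    · rw [hsz i (by simp [h1i, h2i, h3i, h4i]) h5i, zero_mul]
  have hW1all : W1 = CN := by
    rw [hW1def]
    exact Finset.filter_true_of_mem hT2empty
  have hW1card : W1.card = m := by rw [hW1all, hCNcard]
  -- neighbours of x outside CN
  have hNBcard : (G.neighborFinset x).card = k := by
    rw [G.card_neighborFinset_eq_degree]
    exact hsrg.regular x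
  have hCNsub : CN ⊆ G.neighborFinset x := by
    intro w hw
    rw [SimpleGraph.mem_neighborFinset]
    exact ((hmemCN w).1 hw).1
  set D := G.neighborFinset x \ CN with hDdef
  have hDcardsum : D.card + CN.card = (G.neighborFinset x).card :=
    Finset.card_sdiff_add_card_eq_card hCNsub
  have hDprops : ∀ w ∈ D, G.Adj x w ∧ ¬G.Adj y w ∧ w ≠ y := by
    intro w hw
    rw [hDdef, Finset.mem_sdiff, SimpleGraph.mem_neighborFinset] at hw
    have hnyw : ¬ G.Adj y w := fun ha => hw.2 ((hmemCN w).2 ⟨hw.1, ha⟩)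
    refine ⟨hw.1, hnyw, ?_⟩
    intro he
    rw [he] at hw
    exact hnadj hw.1
  have hDT1 : ∀ w ∈ D,
      φ w hd.h = φ x hd.h ∧ φ w hd.g = 0 ∧ φ w hd.p = 0 ∧ φ w hd.q = -φ y hd.q := by
    intro w hw
    obtain ⟨hax, hnay, hney⟩ := hDprops w hw
    rcases nbr_types hsrg hrep hm hxy hnadj hd hax hnay hney with hT1 | hTb | hTc
    · exact hT1
    · exfalso
      have hressum : ∑ i ∈ Finset.univ \ ({hd.h, hd.g, hd.p, hd.q} : Finset (Fin ρ)),
          φ w i * φ w i = 1 := by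
        have hoff := hrep.sq_off w ({hd.h, hd.g, hd.p, hd.q} : Finset (Fin ρ))
        rw [sum_over_four _ hd.d_hg hd.d_hp hd.d_hq hd.d_gp hd.d_gq hd.d_pq,
          hTb.1, hTb.2.1, hTb.2.2.1, hTb.2.2.2, hd.xg2, hd.yq2] at hoff
        exact hoff.trans (by norm_num)
      obtain ⟨s, hsS, hs0, hsz⟩ := exists_single_support (φ w) _ hressum
      have hsd : s ≠ hd.h ∧ (s ≠ hd.g ∧ s ≠ hd.p ∧ s ≠ hd.q) := by
        simpa using (Finset.mem_sdiff.1 hsS).2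
      obtain ⟨w₀, hw₀, hw₀s⟩ := pick_avoid_one hsrg hrep hm hxy hnadj (Ne.symm hsd.1) hxh0
        W1 hanchor (by omega)
      have hw₀I := hW1I w₀ hw₀
      have hne : w ≠ w₀ := by
        intro he
        rw [he] at hTb
        exact hxh0 (hw₀I.1.symm.trans hTb.1)
      apply disjoint_kill hsrg hrep hm hne
      intro i
      by_cases h1i : i = hd.h
      · rw [h1i, hTb.1, zero_mul]
      by_cases h2i : i = hd.g
      · rw [h2i, hw₀I.2.1, mul_zero]
      by_cases h3i : i = hd.p
      · rw [h3i, hTb.2.2.1, zero_mul]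
      by_cases h4i : i = hd.q
      · rw [h4i, hw₀I.2.2.2, mul_zero]
      by_cases h5i : i = s
      · rw [h5i, hw₀s, mul_zero]
      · rw [hsz i (by simp [h1i, h2i, h3i, h4i]) h5i, zero_mul]
    · exfalso
      have hressum : ∑ i ∈ Finset.univ \ ({hd.h, hd.g, hd.p, hd.q} : Finset (Fin ρ)),
          φ w i * φ w i = 2 := by
        have hoff := hrep.sq_off w ({hd.h, hd.g, hd.p, hd.q} : Finset (Fin ρ))
        rw [sum_over_four _ hd.d_hg hd.d_hp hd.d_hq hd.d_gp hd.d_gq hd.d_pq,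
          hTc.1, hTc.2.1, hTc.2.2.1, hTc.2.2.2, hd.xp2] at hoff
        exact hoff.trans (by norm_num)
      obtain ⟨s₁, hs1S, s₂, hs2S, hs12, hs10, hs20, hsz⟩ :=
        exists_double_support (φ w) _ hressum
      have hsd1 : s₁ ≠ hd.h ∧ (s₁ ≠ hd.g ∧ s₁ ≠ hd.p ∧ s₁ ≠ hd.q) := by
        simpa using (Finset.mem_sdiff.1 hs1S).2
      have hsd2 : s₂ ≠ hd.h ∧ (s₂ ≠ hd.g ∧ s₂ ≠ hd.p ∧ s₂ ≠ hd.q) := by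
        simpa using (Finset.mem_sdiff.1 hs2S).2
      obtain ⟨w₀, hw₀, hw₀s1, hw₀s2⟩ := pick_avoid_two hsrg hrep hm hxy hnadj
        (Ne.symm hsd1.1) (Ne.symm hsd2.1) hxh0 W1 hanchor (by omega)
      have hw₀I := hW1I w₀ hw₀
      have hne : w ≠ w₀ := by
        intro he
        rw [he] at hTc
        exact hxh0 (hw₀I.1.symm.trans hTc.1)
      apply disjoint_kill hsrg hrep hm hne
      intro i
      by_cases h1i : i = hd.h
      · rw [h1i, hTc.1, zero_mul]
      by_cases h2i : i = hd.g
      · rw [h2i, hTc.2.1, zero_mul]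
      by_cases h3i : i = hd.p
      · rw [h3i, hw₀I.2.2.1, mul_zero]
      by_cases h4i : i = hd.q
      · rw [h4i, hTc.2.2.2, zero_mul]
      by_cases h5i : i = s₁
      · rw [h5i, hw₀s1, mul_zero]
      by_cases h6i : i = s₂
      · rw [h6i, hw₀s2, mul_zero]
      · rw [hsz i (by simp [h1i, h2i, h3i, h4i]) h5i h6i, zero_mul]
  have hDcard1 : D.card ≤ 1 := by
    rw [Finset.card_le_one]
    intro w hw w' hw'
    have hT := hDT1 w hw
    have hT' := hDT1 w' hw'
    by_contra hne
    exact share_two hsrg hrep hm hxy hnadj hne hd.d_hq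
      (by rw [hT.1]; exact hxh0) (by rw [hT.2.2.2]; exact neg_ne_zero.2 hyq0)
      (by rw [hT'.1, hT.1]) (by rw [hT'.2.2.2, hT.2.2.2])
  -- case split on D
  rcases (by omega : D.card = 0 ∨ D.card = 1) with hD0 | hD1
  · omega
  · exfalso
    obtain ⟨z, hzD⟩ := Finset.card_eq_one.1 hD1
    have hzmem : z ∈ D := by rw [hzD]; exact Finset.mem_singleton_self z
    obtain ⟨hzx, hzny, hzney⟩ := hDprops z hzmem
    have hzT := hDT1 z hzmem
    -- residual coordinate r of z
    have hressum : ∑ i ∈ Finset.univ \ ({hd.h, hd.g, hd.p, hd.q} : Finset (Fin ρ)),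
        φ z i * φ z i = 1 := by
      have hoff := hrep.sq_off z ({hd.h, hd.g, hd.p, hd.q} : Finset (Fin ρ))
      rw [sum_over_four _ hd.d_hg hd.d_hp hd.d_hq hd.d_gp hd.d_gq hd.d_pq,
        hzT.1, hzT.2.1, hzT.2.2.1, hzT.2.2.2, hd.xh2] at hoff
      have hq2 : -φ y hd.q * -φ y hd.q = 1 := by
        have := hd.yq2
        nlinarith [this]
      rw [hq2] at hoff
      exact hoff.trans (by norm_num)
    obtain ⟨r, hrS, hr0, hrz⟩ := exists_single_support (φ z) _ hressum
    have hrd : r ≠ hd.h ∧ (r ≠ hd.g ∧ r ≠ hd.p ∧ r ≠ hd.q) := by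
      simpa using (Finset.mem_sdiff.1 hrS).2
    have hz0 : ∀ i, i ≠ hd.h → i ≠ hd.q → i ≠ r → φ z i = 0 := by
      intro i h1 h2 h3
      by_cases h4 : i = hd.g
      · rw [h4]; exact hzT.2.1
      by_cases h5 : i = hd.p
      · rw [h5]; exact hzT.2.2.1
      · exact hrz i (by simp [h1, h4, h5, h2]) h3
    have hzr2 : φ z r * φ z r = 1 := by
      have := hrep.entry z r
      have : φ z r = -1 ∨ φ z r = 1 := by omega
      rcases this with he | he <;> rw [he] <;> norm_num
    -- dot products with z
    have hdz : ∀ w : V, ∑ i, φ w i * φ z i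
        = φ w hd.h * φ z hd.h + φ w hd.q * φ z hd.q + φ w r * φ z r := by
      intro w
      rw [sum_split ({hd.h, hd.q, r} : Finset (Fin ρ)) (fun i => φ w i * φ z i),
        sum_over_three _ hd.d_hq (Ne.symm hrd.1) (Ne.symm hrd.2.2.2)]
      have h0 : ∑ i ∈ Finset.univ \ ({hd.h, hd.q, r} : Finset (Fin ρ)), φ w i * φ z i = 0 := by
        apply Finset.sum_eq_zero
        intro i hi
        simp only [Finset.mem_sdiff, Finset.mem_univ, true_and, Finset.mem_insert,
          Finset.mem_singleton, not_or] at hi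
        rw [hz0 i hi.1 hi.2.1 hi.2.2, mul_zero]
      rw [h0]
      ring
    -- W1 members: value at r is 0 or -φ z r
    have hWr : ∀ w ∈ W1, φ w r * φ z r = 0 ∨ φ w r * φ z r = -1 := by
      intro w hw
      have hwI := hW1I w hw
      have hwadj := hW1adj w hw
      have hwz : w ≠ z := by
        intro he
        rw [he] at hwadj
        exact hzny hwadj.2
      have hdot := hrep.dot01 hwz
      rw [hdz w, hwI.1, hzT.1, hd.xh2, hwI.2.2.2, hzT.2.2.2] at hdot
      have hb1 := hrep.entry w r
      have hb2 := hrep.entry z r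
      have hbp := mul_bound hb1.1 hb1.2 hb2.1 hb2.2
      rcases hdot with h | h
      · right; omega
      · left; omega
    set Zs := W1.filter (fun w => φ w r = 0) with hZsdef
    set Wb := W1.filter (fun w => ¬ φ w r = 0) with hWbdef
    have hZWsum : Zs.card + Wb.card = m := by
      rw [hZsdef, hWbdef, Finset.card_filter_add_card_filter_not, hW1card]
    have hWbval : ∀ w ∈ Wb, φ w r = -φ z r := by
      intro w hw
      rw [hWbdef, Finset.mem_filter] at hw
      rcases hWr w hw.1 with h | h
      · exact absurd (by rcases mul_eq_zero.1 h with h' | h'; exact h'; exact absurd h' hr0)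
          hw.2
      · have : φ z r * φ w r = -1 := by rw [mul_comm]; exact h
        exact neg_of_mul_self_one_of_mul_neg_one hzr2 this
    have hWbcard : Wb.card ≤ 1 := by
      rw [Finset.card_le_one]
      intro w hw w' hw'
      have hv1 := hWbval w hw
      have hv2 := hWbval w' hw'
      have hwW1 : w ∈ W1 := by rw [hWbdef] at hw; exact Finset.mem_of_mem_filter w hw
      have hwW1' : w' ∈ W1 := by rw [hWbdef] at hw'; exact Finset.mem_of_mem_filter w' hw'
      by_contra hne
      exact share_two hsrg hrep hm hxy hnadj hne (Ne.symm hrd.1)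
        (by rw [(hW1I w hwW1).1]; exact hxh0) (by rw [hv1]; exact neg_ne_zero.2 hr0)
        (by rw [(hW1I w' hwW1').1, (hW1I w hwW1).1]) (by rw [hv2, hv1])
    -- common neighbours of the edge (x, z)
    have hlcard : (G.commonNeighbors x z).toFinset.card = l := by
      rw [Set.toFinset_card]
      exact hsrg.of_adj x z hzx
    have hCXZ : (G.commonNeighbors x z).toFinset = Zs := by
      ext w
      rw [Set.mem_toFinset, SimpleGraph.mem_commonNeighbors]
      constructor
      · rintro ⟨hax, haz⟩
        have hwNB : w ∈ G.neighborFinset x := by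
          rw [SimpleGraph.mem_neighborFinset]; exact hax
        have hwz : w ≠ z := fun he => G.irrefl (he ▸ haz)
        by_cases hwCN : w ∈ CN
        · have hwW1 : w ∈ W1 := by rw [hW1all]; exact hwCN
          have hdot : ∑ i, φ w i * φ z i = 1 := hrep.adj1 w z haz.symm
          rw [hdz w, (hW1I w hwW1).1, hzT.1, hd.xh2, (hW1I w hwW1).2.2.2, hzT.2.2.2] at hdot
          have hwr0 : φ w r = 0 := by
            have : φ w r * φ z r = 0 := by linarith
            rcases mul_eq_zero.1 this with h' | h'
            · exact h'
            · exact absurd h' hr0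
          rw [hZsdef]
          exact Finset.mem_filter.2 ⟨hwW1, hwr0⟩
        · exfalso
          have : w ∈ D := by rw [hDdef]; exact Finset.mem_sdiff.2 ⟨hwNB, hwCN⟩
          rw [hzD, Finset.mem_singleton] at this
          exact hwz this
      · intro hw
        rw [hZsdef, Finset.mem_filter] at hw
        have hwI := hW1I w hw.1
        have hwadj := hW1adj w hw.1
        have hwz : w ≠ z := by
          intro he
          rw [he] at hwadj
          exact hzny hwadj.2
        have hdot : ∑ i, φ w i * φ z i = 1 := by
          rw [hdz w, hwI.1, hzT.1, hd.xh2, hwI.2.2.2, hzT.2.2.2, hw.2]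
          ring
        exact ⟨hwadj.1, (hrep.adj_of_dot_one hwz hdot).symm⟩
    have hleq : l = Zs.card := by rw [← hCXZ, hlcard]
    -- the counting contradiction
    have hkm1 : k = m + 1 := by
      rw [hzD] at hDcardsum
      simp only [Finset.card_singleton] at hDcardsum
      omega
    have hvbig : k + 2 ≤ v := by
      have hxNB : x ∉ G.neighborFinset x := by
        rw [SimpleGraph.mem_neighborFinset]
        exact G.irrefl
      have hyNB : y ∉ G.neighborFinset x := by
        rw [SimpleGraph.mem_neighborFinset]
        exact hnadj
      have hxiNB : x ∉ insert y (G.neighborFinset x) := by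
        rw [Finset.mem_insert]
        push_neg
        exact ⟨hxy, hxNB⟩
      have hsub : insert x (insert y (G.neighborFinset x)) ⊆ Finset.univ :=
        Finset.subset_univ _
      have hcard := Finset.card_le_card hsub
      rw [Finset.card_insert_of_notMem hxiNB, Finset.card_insert_of_notMem hyNB,
        Finset.card_univ, hsrg.card, hNBcard] at hcard
      omega
    have hpe := SimpleGraph.IsSRGWith.param_eq G hsrg (by omega : 0 < v)
    rcases (by omega : Wb.card = 0 ∨ Wb.card = 1) with hWb0 | hWb1
    · have hkl : k - l - 1 = 0 := by omega
      rw [hkl, Nat.mul_zero] at hpe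
      rcases Nat.mul_eq_zero.1 hpe.symm with h | h <;> omega
    · have hkl : k - l - 1 = 1 := by omega
      rw [hkl, Nat.mul_one] at hpe
      rcases (by omega : v - k - 1 = 1 ∨ 2 ≤ v - k - 1) with hdd | hdd
      · rw [hdd, Nat.one_mul] at hpe
        omega
      · have h2m : 2 * m ≤ (v - k - 1) * m := Nat.mul_le_mul_right m hdd
        omega

section Quadratic

lemma gram_expand (ξ : V → ℤ) :
    ∑ w, ∑ u, ξ w * ξ u * (∑ i, φ w i * φ u i)
      = ∑ i, (∑ w, ξ w * φ w i) * (∑ w, ξ w * φ w i) := by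
  calc ∑ w, ∑ u, ξ w * ξ u * (∑ i, φ w i * φ u i)
      = ∑ w, ∑ u, ∑ i, (ξ w * φ w i) * (ξ u * φ u i) := by
        apply Finset.sum_congr rfl
        intro w _
        apply Finset.sum_congr rfl
        intro u _
        rw [Finset.mul_sum]
        apply Finset.sum_congr rfl
        intro i _
        ring
    _ = ∑ w, ∑ i, ∑ u, (ξ w * φ w i) * (ξ u * φ u i) := by
        apply Finset.sum_congr rfl
        intro w _
        exact Finset.sum_comm
    _ = ∑ i, ∑ w, ∑ u, (ξ w * φ w i) * (ξ u * φ u i) := Finset.sum_comm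
    _ = ∑ i, (∑ w, ξ w * φ w i) * (∑ w, ξ w * φ w i) := by
        apply Finset.sum_congr rfl
        intro i _
        exact (Finset.sum_mul_sum _ _ _ _).symm

lemma gram_nonneg (ξ : V → ℤ) :
    0 ≤ ∑ w, ∑ u, ξ w * ξ u * (∑ i, φ w i * φ u i) := by
  rw [gram_expand]
  exact Finset.sum_nonneg fun i _ => mul_self_nonneg _

/-- If classes are coherent, two adjacent vertices give the bound 2ab ≤ 3a+3b. -/
lemma three_bound (hrep : Rep G φ)
    (hcoh : ∀ w u : V, ¬G.Adj w u →
      Finset.univ.filter (fun t => ¬ G.Adj u t) = Finset.univ.filter (fun t => ¬ G.Adj w t))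
    {x y : V} (hadj : G.Adj x y) :
    2 * ((Finset.univ.filter (fun t => ¬ G.Adj x t)).card : ℤ)
        * ((Finset.univ.filter (fun t => ¬ G.Adj y t)).card : ℤ)
      ≤ 3 * ((Finset.univ.filter (fun t => ¬ G.Adj x t)).card : ℤ)
        + 3 * ((Finset.univ.filter (fun t => ¬ G.Adj y t)).card : ℤ) := by
  set Sx := Finset.univ.filter (fun t => ¬ G.Adj x t) with hSx
  set Sy := Finset.univ.filter (fun t => ¬ G.Adj y t) with hSy
  have hmemx : ∀ u, u ∈ Sx ↔ ¬ G.Adj x u := by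
    intro u
    rw [hSx, Finset.mem_filter]
    simp
  have hmemy : ∀ u, u ∈ Sy ↔ ¬ G.Adj y u := by
    intro u
    rw [hSy, Finset.mem_filter]
    simp
  have hdisj : ∀ u, u ∈ Sx → u ∉ Sy := by
    intro u hux huy
    have h1 := hcoh x u ((hmemx u).1 hux)
    have h2 := hcoh y u ((hmemy u).1 huy)
    have h3 : Sx = Sy := by rw [hSx, hSy, ← h1, ← h2]
    have hyy : y ∈ Sy := (hmemy y).2 G.irrefl
    rw [← h3, hmemx] at hyy
    exact hyy hadj
  have hnadjx : ∀ u w, u ∈ Sx → w ∈ Sx → ¬ G.Adj u w := by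
    intro u w hu hw
    have h1 := hcoh x u ((hmemx u).1 hu)
    rw [hSx, ← h1, Finset.mem_filter] at hw
    exact hw.2
  have hnadjy : ∀ u w, u ∈ Sy → w ∈ Sy → ¬ G.Adj u w := by
    intro u w hu hw
    have h1 := hcoh y u ((hmemy u).1 hu)
    rw [hSy, ← h1, Finset.mem_filter] at hw
    exact hw.2
  have hcross : ∀ u w, u ∈ Sx → w ∈ Sy → G.Adj u w := by
    intro u w hu hw
    by_contra hno
    have h1 := hcoh x u ((hmemx u).1 hu)
    have hwSx : w ∈ Sx := by
      rw [hSx, ← h1, Finset.mem_filter]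
      exact ⟨Finset.mem_univ _, hno⟩
    exact hdisj w hwSx hw
  have hne : ∀ u w, u ∈ Sx → w ∈ Sy → u ≠ w := by
    intro u w hu hw he
    exact hdisj u hu (he ▸ hw)
  set ξ : V → ℤ := fun w => (if w ∈ Sx then (1:ℤ) else 0) - (if w ∈ Sy then 1 else 0) with hξ
  have hQ := gram_nonneg (φ := φ) ξ
  -- expand the inner sums
  have hsplit : ∀ w : V, ∑ u, ξ u * (∑ i, φ w i * φ u i)
      = (∑ u ∈ Sx, ∑ i, φ w i * φ u i) - ∑ u ∈ Sy, ∑ i, φ w i * φ u i := by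
    intro w
    have h1 : ∀ u : V, ξ u * (∑ i, φ w i * φ u i)
        = (if u ∈ Sx then (∑ i, φ w i * φ u i) else 0)
          - (if u ∈ Sy then (∑ i, φ w i * φ u i) else 0) := by
      intro u
      rw [hξ]
      by_cases h1u : u ∈ Sx <;> by_cases h2u : u ∈ Sy <;> simp [h1u, h2u] <;> ring
    rw [Finset.sum_congr rfl (fun u _ => h1 u), Finset.sum_sub_distrib]
    congr 1
    · rw [Finset.sum_ite_mem, Finset.univ_inter]
    · rw [Finset.sum_ite_mem, Finset.univ_inter]
  have hdxx : ∀ w ∈ Sx, ∑ u ∈ Sx, (∑ i, φ w i * φ u i) = 3 := by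
    intro w hw
    rw [Finset.sum_eq_single_of_mem w hw]
    · exact hrep.norm3 w
    · intro u hu hne'
      exact hrep.nadj0 w u (Ne.symm hne') (hnadjx w u hw hu)
  have hdyy : ∀ w ∈ Sy, ∑ u ∈ Sy, (∑ i, φ w i * φ u i) = 3 := by
    intro w hw
    rw [Finset.sum_eq_single_of_mem w hw]
    · exact hrep.norm3 w
    · intro u hu hne'
      exact hrep.nadj0 w u (Ne.symm hne') (hnadjy w u hw hu)
  have hdxy : ∀ w ∈ Sy, ∑ u ∈ Sx, (∑ i, φ w i * φ u i) = (Sx.card : ℤ) := by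
    intro w hw
    rw [Finset.sum_congr rfl (fun u hu => hrep.adj1 w u ((hcross u w hu hw).symm)),
      Finset.sum_const, nsmul_eq_mul, mul_one]
  have hdyx : ∀ w ∈ Sx, ∑ u ∈ Sy, (∑ i, φ w i * φ u i) = (Sy.card : ℤ) := by
    intro w hw
    rw [Finset.sum_congr rfl (fun u hu => hrep.adj1 w u (hcross w u hw hu)),
      Finset.sum_const, nsmul_eq_mul, mul_one]
  -- total
  have htot : ∑ w, ∑ u, ξ w * ξ u * (∑ i, φ w i * φ u i)
      = (Sx.card : ℤ) * (3 - Sy.card) - (Sy.card : ℤ) * ((Sx.card : ℤ) - 3) := by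
    have h1 : ∀ w : V, ∑ u, ξ w * ξ u * (∑ i, φ w i * φ u i)
        = ξ w * ∑ u, ξ u * (∑ i, φ w i * φ u i) := by
      intro w
      rw [Finset.mul_sum]
      apply Finset.sum_congr rfl
      intro u _
      ring
    rw [Finset.sum_congr rfl (fun w _ => h1 w)]
    have h2 : ∀ w : V, ξ w * ∑ u, ξ u * (∑ i, φ w i * φ u i)
        = (if w ∈ Sx then ((∑ u ∈ Sx, ∑ i, φ w i * φ u i)
            - ∑ u ∈ Sy, ∑ i, φ w i * φ u i) else 0)
          - (if w ∈ Sy then ((∑ u ∈ Sx, ∑ i, φ w i * φ u i)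
            - ∑ u ∈ Sy, ∑ i, φ w i * φ u i) else 0) := by
      intro w
      rw [hsplit w, hξ]
      by_cases h1w : w ∈ Sx <;> by_cases h2w : w ∈ Sy <;> simp [h1w, h2w] <;> ring
    rw [Finset.sum_congr rfl (fun w _ => h2 w), Finset.sum_sub_distrib]
    rw [Finset.sum_ite_mem, Finset.univ_inter, Finset.sum_ite_mem, Finset.univ_inter]
    have h3 : ∑ w ∈ Sx, ((∑ u ∈ Sx, ∑ i, φ w i * φ u i) - ∑ u ∈ Sy, ∑ i, φ w i * φ u i)
        = (Sx.card : ℤ) * (3 - Sy.card) := by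
      rw [Finset.sum_congr rfl (fun w hw => by rw [hdxx w hw, hdyx w hw]),
        Finset.sum_const, nsmul_eq_mul]
    have h4 : ∑ w ∈ Sy, ((∑ u ∈ Sx, ∑ i, φ w i * φ u i) - ∑ u ∈ Sy, ∑ i, φ w i * φ u i)
        = (Sy.card : ℤ) * ((Sx.card : ℤ) - 3) := by
      rw [Finset.sum_congr rfl (fun w hw => by rw [hdxy w hw, hdyy w hw]),
        Finset.sum_const, nsmul_eq_mul]
    rw [h3, h4]
  rw [htot] at hQ
  nlinarith [hQ]

end Quadratic

section Spectral

omit [DecidableEq V] in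
/-- If every vertex has at most `c ≤ 2` "non-neighbours (including itself)",
then every eigenvalue is at least -2. -/
lemma spectral_lb {θ : ℝ}
    (hcard : ∀ w : V, (Finset.univ.filter (fun u => ¬ G.Adj w u)).card ≤ 2)
    (x₀ : V → ℝ) (hx0 : x₀ ≠ 0) (heig : (G.adjMatrix ℝ).mulVec x₀ = θ • x₀) :
    -2 ≤ θ := by
  classical
  have hrow : ∀ w, θ * x₀ w
      = (∑ u, x₀ u) - ∑ u ∈ Finset.univ.filter (fun u => ¬ G.Adj w u), x₀ u := by
    intro w
    have h1 : (G.adjMatrix ℝ).mulVec x₀ w = θ * x₀ w := by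
      rw [heig]
      simp [Pi.smul_apply, smul_eq_mul]
    rw [Matrix.mulVec, dotProduct] at h1
    have h2 : ∀ u, (G.adjMatrix ℝ) w u * x₀ u
        = x₀ u - (if ¬ G.Adj w u then x₀ u else 0) := by
      intro u
      rw [SimpleGraph.adjMatrix_apply]
      by_cases h : G.Adj w u <;> simp [h]
    rw [Finset.sum_congr rfl (fun u _ => h2 u), Finset.sum_sub_distrib,
      ← Finset.sum_filter] at h1
    linarith [h1]
  have hquad : θ * ∑ w, x₀ w * x₀ w
      = (∑ u, x₀ u) * (∑ u, x₀ u)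
        - ∑ w, x₀ w * ∑ u ∈ Finset.univ.filter (fun u => ¬ G.Adj w u), x₀ u := by
    calc θ * ∑ w, x₀ w * x₀ w = ∑ w, x₀ w * (θ * x₀ w) := by
          rw [Finset.mul_sum]
          apply Finset.sum_congr rfl
          intro w _
          ring
      _ = ∑ w, x₀ w * ((∑ u, x₀ u)
            - ∑ u ∈ Finset.univ.filter (fun u => ¬ G.Adj w u), x₀ u) := by
          apply Finset.sum_congr rfl
          intro w _
          rw [hrow w]
      _ = ∑ w, (x₀ w * (∑ u, x₀ u)
            - x₀ w * ∑ u ∈ Finset.univ.filter (fun u => ¬ G.Adj w u), x₀ u) := by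
          apply Finset.sum_congr rfl
          intro w _
          ring
      _ = (∑ u, x₀ u) * (∑ u, x₀ u)
            - ∑ w, x₀ w * ∑ u ∈ Finset.univ.filter (fun u => ¬ G.Adj w u), x₀ u := by
          rw [Finset.sum_sub_distrib, ← Finset.sum_mul, mul_comm]
  have hT : ∑ w, x₀ w * ∑ u ∈ Finset.univ.filter (fun u => ¬ G.Adj w u), x₀ u
      ≤ 2 * ∑ w, x₀ w * x₀ w := by
    have h1 : ∀ w : V, x₀ w * ∑ u ∈ Finset.univ.filter (fun u => ¬ G.Adj w u), x₀ u
        ≤ ∑ u ∈ Finset.univ.filter (fun u => ¬ G.Adj w u),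
            (x₀ w * x₀ w / 2 + x₀ u * x₀ u / 2) := by
      intro w
      rw [Finset.mul_sum]
      apply Finset.sum_le_sum
      intro u _
      nlinarith [sq_nonneg (x₀ w - x₀ u)]
    have h2 : ∑ w, x₀ w * ∑ u ∈ Finset.univ.filter (fun u => ¬ G.Adj w u), x₀ u
        ≤ ∑ w, ∑ u ∈ Finset.univ.filter (fun u => ¬ G.Adj w u),
            (x₀ w * x₀ w / 2 + x₀ u * x₀ u / 2) := Finset.sum_le_sum fun w _ => h1 w
    have h3 : ∀ w : V, ∑ u ∈ Finset.univ.filter (fun u => ¬ G.Adj w u),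
        (x₀ w * x₀ w / 2 + x₀ u * x₀ u / 2)
        = (Finset.univ.filter (fun u => ¬ G.Adj w u)).card * (x₀ w * x₀ w / 2)
          + ∑ u ∈ Finset.univ.filter (fun u => ¬ G.Adj w u), x₀ u * x₀ u / 2 := by
      intro w
      rw [Finset.sum_add_distrib, Finset.sum_const, nsmul_eq_mul]
    have h4 : ∀ w : V, (Finset.univ.filter (fun u => ¬ G.Adj w u)).card * (x₀ w * x₀ w / 2)
        ≤ 2 * (x₀ w * x₀ w / 2) := by
      intro w
      have hc := hcard w
      have hnn : (0:ℝ) ≤ x₀ w * x₀ w / 2 := by nlinarith [mul_self_nonneg (x₀ w)]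
      have : ((Finset.univ.filter (fun u => ¬ G.Adj w u)).card : ℝ) ≤ 2 := by
        exact_mod_cast hc
      nlinarith
    have h5 : ∑ w, ∑ u ∈ Finset.univ.filter (fun u => ¬ G.Adj w u), x₀ u * x₀ u / 2
        ≤ ∑ w : V, 2 * (x₀ w * x₀ w / 2) := by
      have ha : ∑ w, ∑ u ∈ Finset.univ.filter (fun u => ¬ G.Adj w u), x₀ u * x₀ u / 2
          = ∑ w, ∑ u, (if ¬ G.Adj w u then x₀ u * x₀ u / 2 else 0) := by
        apply Finset.sum_congr rfl
        intro w _
        rw [Finset.sum_filter]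
      have hb : ∑ w, ∑ u, (if ¬ G.Adj w u then x₀ u * x₀ u / 2 else 0)
          = ∑ u, ∑ w, (if ¬ G.Adj w u then x₀ u * x₀ u / 2 else 0) := Finset.sum_comm
      have hc' : ∀ u : V, ∑ w, (if ¬ G.Adj w u then x₀ u * x₀ u / 2 else 0)
          = ∑ w, (if ¬ G.Adj u w then x₀ u * x₀ u / 2 else 0) := by
        intro u
        apply Finset.sum_congr rfl
        intro w _
        rw [G.adj_comm]
      have hd : ∀ u : V, ∑ w, (if ¬ G.Adj u w then x₀ u * x₀ u / 2 else 0)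
          = (Finset.univ.filter (fun w => ¬ G.Adj u w)).card * (x₀ u * x₀ u / 2) := by
        intro u
        rw [← Finset.sum_filter, Finset.sum_const, nsmul_eq_mul]
      rw [ha, hb]
      rw [Finset.sum_congr rfl (fun u _ => (hc' u).trans (hd u))]
      apply Finset.sum_le_sum
      intro u _
      have hc := hcard u
      have hnn : (0:ℝ) ≤ x₀ u * x₀ u / 2 := by nlinarith [mul_self_nonneg (x₀ u)]
      have : ((Finset.univ.filter (fun w => ¬ G.Adj u w)).card : ℝ) ≤ 2 := by
        exact_mod_cast hc
      nlinarith
    calc ∑ w, x₀ w * ∑ u ∈ Finset.univ.filter (fun u => ¬ G.Adj w u), x₀ u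
        ≤ ∑ w, ∑ u ∈ Finset.univ.filter (fun u => ¬ G.Adj w u),
            (x₀ w * x₀ w / 2 + x₀ u * x₀ u / 2) := h2
      _ = ∑ w, ((Finset.univ.filter (fun u => ¬ G.Adj w u)).card * (x₀ w * x₀ w / 2))
            + ∑ w, ∑ u ∈ Finset.univ.filter (fun u => ¬ G.Adj w u), x₀ u * x₀ u / 2 := by
          rw [Finset.sum_congr rfl (fun w _ => h3 w), Finset.sum_add_distrib]
      _ ≤ ∑ w : V, 2 * (x₀ w * x₀ w / 2) + ∑ w : V, 2 * (x₀ w * x₀ w / 2) := by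
          have := Finset.sum_le_sum (fun w (_ : w ∈ Finset.univ) => h4 w)
          linarith [this, h5]
      _ = 2 * ∑ w, x₀ w * x₀ w := by
          rw [← Finset.sum_add_distrib, Finset.mul_sum]
          apply Finset.sum_congr rfl
          intro w _
          ring
  have hnorm : 0 < ∑ w, x₀ w * x₀ w := by
    have hnn : 0 ≤ ∑ w, x₀ w * x₀ w := Finset.sum_nonneg fun w _ => mul_self_nonneg _
    rcases hnn.lt_or_eq with h | h
    · exact h
    · exfalso
      apply hx0
      funext w
      have h2 := (Finset.sum_eq_zero_iff_of_nonneg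
        (fun w (_ : w ∈ Finset.univ) => mul_self_nonneg (x₀ w))).1 h.symm w (Finset.mem_univ w)
      exact mul_self_eq_zero.1 h2
  nlinarith [hquad, hT, mul_self_nonneg (∑ u, x₀ u), hnorm]

end Spectral

/-- when k = m, nonadjacent vertices have equal neighbourhoods -/
lemma nbr_eq_of_km (hsrg : G.IsSRGWith v k l m) (hkm : k = m)
    {x y : V} (hxy : x ≠ y) (hnadj : ¬G.Adj x y) :
    G.neighborFinset x = G.neighborFinset y := by
  have key : ∀ a b : V, a ≠ b → ¬G.Adj a b → G.neighborFinset a ⊆ G.neighborFinset b := by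
    intro a b hab hnab
    have hsub : (G.commonNeighbors a b).toFinset ⊆ G.neighborFinset a := by
      intro w hw
      rw [Set.mem_toFinset, SimpleGraph.mem_commonNeighbors] at hw
      rw [SimpleGraph.mem_neighborFinset]
      exact hw.1
    have hcards : (G.neighborFinset a).card ≤ (G.commonNeighbors a b).toFinset.card := by
      rw [Set.toFinset_card, hsrg.of_not_adj hab hnab, G.card_neighborFinset_eq_degree,
        hsrg.regular a]
      omega
    have heq := Finset.eq_of_subset_of_card_le hsub hcards
    intro w hw
    rw [← heq, Set.mem_toFinset, SimpleGraph.mem_commonNeighbors] at hw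
    rw [SimpleGraph.mem_neighborFinset]
    exact hw.2
  exact Finset.Subset.antisymm (key x y hxy hnadj)
    (key y x (Ne.symm hxy) (fun h => hnadj h.symm))

lemma coherence_of_km (hsrg : G.IsSRGWith v k l m) (hkm : k = m) :
    ∀ w u : V, ¬G.Adj w u →
      Finset.univ.filter (fun t => ¬ G.Adj u t) = Finset.univ.filter (fun t => ¬ G.Adj w t) := by
  intro w u hnadj
  by_cases he : w = u
  · rw [he]
  have hN := nbr_eq_of_km hsrg hkm he hnadj
  ext t
  simp only [Finset.mem_filter, Finset.mem_univ, true_and]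
  have hiff : G.Adj u t ↔ G.Adj w t := by
    constructor
    · intro h
      have h2 : t ∈ G.neighborFinset u := by
        rw [SimpleGraph.mem_neighborFinset]; exact h
      rw [← hN, SimpleGraph.mem_neighborFinset] at h2
      exact h2
    · intro h
      have h2 : t ∈ G.neighborFinset w := by
        rw [SimpleGraph.mem_neighborFinset]; exact h
      rw [hN, SimpleGraph.mem_neighborFinset] at h2
      exact h2
  exact not_congr hiff

lemma class_card (hsrg : G.IsSRGWith v k l m) (w : V) :
    (Finset.univ.filter (fun u => ¬ G.Adj w u)).card = v - k := by
  have h1 : Finset.univ.filter (fun u => G.Adj w u) = G.neighborFinset w := by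
    ext u
    simp [SimpleGraph.mem_neighborFinset]
  have h3 : (G.neighborFinset w).card = k := by
    rw [G.card_neighborFinset_eq_degree]
    exact hsrg.regular w
  rw [Finset.filter_not, Finset.card_sdiff_of_subset (Finset.filter_subset _ _), h1, h3,
    Finset.card_univ, hsrg.card]


end SRGm3

open SRGm3

/-- `θ` is the smallest eigenvalue of the real matrix `A`. -/
def IsSmallestEigenval {V : Type} [Fintype V] (A : Matrix V V ℝ) (θ : ℝ) : Prop :=
  (∃ x : V → ℝ, x ≠ 0 ∧ A.mulVec x = θ • x) ∧
    ∀ μ : ℝ, (∃ x : V → ℝ, x ≠ 0 ∧ A.mulVec x = μ • x) → θ ≤ μ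

open scoped Classical in
/-- An integrable strongly regular graph with smallest eigenvalue in `[-3,-2)` and `μ ≥ 10`
is the complete multipartite graph `K_{(v/3)×3}`. -/
theorem stmt_0 {V : Type} [Fintype V] [DecidableEq V] (G : SimpleGraph V)
    (v k l m : ℕ) (hsrg : G.IsSRGWith v k l m)
    (θ : ℝ) (hθ : IsSmallestEigenval (G.adjMatrix ℝ) θ)
    (hθ1 : -3 ≤ θ) (hθ2 : θ < -2)
    (hint : ∃ (ρ : ℕ) (N : Matrix (Fin ρ) V ℤ), Nᵀ * N = G.adjMatrix ℤ + 3 • 1)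
    (hm : 10 ≤ m) :
    3 ∣ v ∧
      Nonempty (G ≃g SimpleGraph.completeMultipartiteGraph (fun _ : Fin (v / 3) => Fin 3)) := by
  classical
  obtain ⟨ρ, N, hNN⟩ := hint
  set φ : V → Fin ρ → ℤ := fun x i => N i x with hφ
  have hent : ∀ x y : V, ∑ i, φ x i * φ y i
      = (if G.Adj x y then (1:ℤ) else 0) + 3 * (if x = y then 1 else 0) := by
    intro x y
    have h1 := congrFun (congrFun hNN x) y
    rw [Matrix.mul_apply, Matrix.add_apply, SimpleGraph.adjMatrix_apply,
      Matrix.smul_apply, Matrix.one_apply] at h1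
    simp only [Matrix.transpose_apply, smul_eq_mul] at h1
    rw [hφ]
    exact h1
  have hrep : Rep G φ := by
    constructor
    · intro x
      have h1 := hent x x
      rw [if_neg (G.irrefl), if_pos rfl] at h1
      omega
    · intro x y hadj
      have h1 := hent x y
      rw [if_pos hadj, if_neg (G.ne_of_adj hadj)] at h1
      omega
    · intro x y hne hnadj
      have h1 := hent x y
      rw [if_neg hnadj, if_neg hne] at h1
      omega
  obtain ⟨x₀, hx₀ne, hx₀eig⟩ := hθ.1
  have hVne : Nonempty V := by
    by_contra hno
    apply hx₀ne
    funext w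
    exact (hno ⟨w⟩).elim
  -- there is a nonadjacent pair
  have hpair : ∃ a b : V, a ≠ b ∧ ¬ G.Adj a b := by
    by_contra hno
    push_neg at hno
    have hcard : ∀ w : V, (Finset.univ.filter (fun u => ¬ G.Adj w u)).card ≤ 2 := by
      intro w
      have hsingle : Finset.univ.filter (fun u => ¬ G.Adj w u) = {w} := by
        ext u
        simp only [Finset.mem_filter, Finset.mem_univ, true_and, Finset.mem_singleton]
        constructor
        · intro h
          by_contra hne
          exact h (hno w u (fun he => hne he.symm))
        · intro h
          rw [h]
          exact G.irrefl
      rw [hsingle, Finset.card_singleton]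
      omega
    have := spectral_lb hcard x₀ hx₀ne hx₀eig
    linarith
  obtain ⟨a0, b0, hab0, hnab0⟩ := hpair
  have hkm : k = m := k_eq_m hsrg hrep hm hab0 hnab0
  have hcoh := coherence_of_km hsrg hkm
  -- v - k ≥ 3
  have ht3 : 3 ≤ v - k := by
    by_contra hlt
    push_neg at hlt
    have hcard2 : ∀ w : V, (Finset.univ.filter (fun u => ¬ G.Adj w u)).card ≤ 2 := by
      intro w
      rw [class_card hsrg w]
      omega
    have := spectral_lb hcard2 x₀ hx₀ne hx₀eig
    linarith
  -- an edge exists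
  have hedge : ∃ x y : V, G.Adj x y := by
    obtain ⟨w⟩ := hVne
    have hdeg : (G.neighborFinset w).card = k := by
      rw [G.card_neighborFinset_eq_degree]
      exact hsrg.regular w
    have hpos : 0 < (G.neighborFinset w).card := by omega
    obtain ⟨u, hu⟩ := Finset.card_pos.1 hpos
    rw [SimpleGraph.mem_neighborFinset] at hu
    exact ⟨w, u, hu⟩
  obtain ⟨ex, ey, hexy⟩ := hedge
  have hbound := three_bound hrep hcoh hexy
  rw [class_card hsrg ex, class_card hsrg ey] at hbound
  have ht4 : v - k ≤ 3 := by
    by_contra h4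
    push_neg at h4
    have h5 : (4:ℤ) ≤ ((v - k : ℕ) : ℤ) := by exact_mod_cast h4
    nlinarith [hbound, h5]
  have htv : v - k = 3 := le_antisymm ht4 ht3
  -- the nonadjacency setoid
  have hsymm : ∀ {a b : V}, ¬G.Adj a b → ¬G.Adj b a := fun h ha => h ha.symm
  have htrans : ∀ {a b c : V}, ¬G.Adj a b → ¬G.Adj b c → ¬G.Adj a c := by
    intro a b c h1 h2
    have hc1 := hcoh a b h1
    have hmem : c ∈ Finset.univ.filter (fun t => ¬ G.Adj b t) := by
      simp only [Finset.mem_filter, Finset.mem_univ, true_and]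
      exact h2
    rw [hc1, Finset.mem_filter] at hmem
    exact hmem.2
  let st : Setoid V := ⟨fun a b => ¬ G.Adj a b,
    ⟨fun a => G.irrefl, fun h => hsymm h, fun h1 h2 => htrans h1 h2⟩⟩
  have hfiber : ∀ q : Quotient st,
      (Finset.univ.filter (fun w => Quotient.mk st w = q)).card = 3 := by
    intro q
    obtain ⟨w, rfl⟩ := Quotient.exists_rep q
    have hfeq : Finset.univ.filter (fun u => Quotient.mk st u = Quotient.mk st w)
        = Finset.univ.filter (fun u => ¬ G.Adj w u) := by
      ext u
      simp only [Finset.mem_filter, Finset.mem_univ, true_and]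
      constructor
      · intro h
        exact hsymm (Quotient.exact h)
      · intro h
        exact Quotient.sound (hsymm h)
    rw [hfeq, class_card hsrg w, htv]
  have hfibtotal : Fintype.card V = Fintype.card (Quotient st) * 3 := by
    have hfib := Finset.card_eq_sum_card_fiberwise
      (f := fun w => Quotient.mk st w) (s := Finset.univ) (t := Finset.univ)
      (fun w _ => Finset.mem_univ _)
    rw [Finset.sum_congr rfl (fun q _ => hfiber q), Finset.sum_const, smul_eq_mul] at hfib
    rw [← Finset.card_univ, hfib, Finset.card_univ]
  have hvq : v = 3 * Fintype.card (Quotient st) := by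
    have := hsrg.card
    omega
  refine ⟨⟨Fintype.card (Quotient st), hvq⟩, ?_⟩
  have hn : Fintype.card (Quotient st) = v / 3 := by omega
  let eQ : Quotient st ≃ Fin (v / 3) := Fintype.equivFinOfCardEq hn
  have hfibcard : ∀ q : Quotient st, Fintype.card {w : V // Quotient.mk st w = q} = 3 := by
    intro q
    rw [Fintype.card_subtype]
    exact hfiber q
  let eF : ∀ q : Quotient st, {w : V // Quotient.mk st w = q} ≃ Fin 3 :=
    fun q => Fintype.equivFinOfCardEq (hfibcard q)
  have key : ∀ (w : V) (q : Quotient st) (hq : Quotient.mk st w = q),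
      (⟨eQ (Quotient.mk st w), eF (Quotient.mk st w) ⟨w, rfl⟩⟩ : Σ _ : Fin (v/3), Fin 3)
        = ⟨eQ q, eF q ⟨w, hq⟩⟩ := by
    intro w q hq
    subst hq
    rfl
  refine ⟨⟨⟨fun w => ⟨eQ (Quotient.mk st w), eF (Quotient.mk st w) ⟨w, rfl⟩⟩,
    fun p => ((eF (eQ.symm p.1)).symm p.2).1, ?_, ?_⟩, ?_⟩⟩
  · intro w
    show ((eF (eQ.symm (eQ (Quotient.mk st w)))).symm
      (eF (Quotient.mk st w) ⟨w, rfl⟩)).1 = w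
    rw [Equiv.symm_apply_apply, Equiv.symm_apply_apply]
  · rintro ⟨i, j⟩
    show (⟨eQ (Quotient.mk st (((eF (eQ.symm i)).symm j).1)),
      eF (Quotient.mk st (((eF (eQ.symm i)).symm j).1)) ⟨_, rfl⟩⟩
        : Σ _ : Fin (v/3), Fin 3) = ⟨i, j⟩
    have hw : Quotient.mk st (((eF (eQ.symm i)).symm j).1) = eQ.symm i :=
      ((eF (eQ.symm i)).symm j).2
    rw [key _ _ hw]
    have h1 : eQ (eQ.symm i) = i := Equiv.apply_symm_apply eQ i
    have h2 : eF (eQ.symm i) ⟨((eF (eQ.symm i)).symm j).1, hw⟩ = j := by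
      have h3 : (⟨((eF (eQ.symm i)).symm j).1, hw⟩ : {u : V // Quotient.mk st u = eQ.symm i})
          = (eF (eQ.symm i)).symm j := Subtype.ext rfl
      rw [h3, Equiv.apply_symm_apply]
    rw [h1, h2]
  · intro a b
    simp only [SimpleGraph.comap_adj, SimpleGraph.top_adj, Equiv.coe_fn_mk]
    constructor
    · intro hne
      by_contra hnadj
      exact hne (by rw [Quotient.sound (show st.r a b from hnadj)])
    · intro hadj he
      have h1 : eQ (Quotient.mk st a) = eQ (Quotient.mk st b) := he
      have h2 := eQ.injective h1
      exact (Quotient.exact h2 : st.r a b) hadj
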